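/- arXiv:math/0606721 — 7 statements merged into one kernel-verified Lean document; each statement's English description precedes it below -/
import Mathlib

section
/- Let A be a bounded self-adjoint operator on a complex Hilbert space H, let z ∈ ℂ and δ > 0, and suppose that the spectrum of A contains no point of the interval [Re z − |Im z| − δ, Re z + |Im z| + δ]. Then for every u ∈ H, Re⟨(A − z)u, (A − z̄)u⟩ ≥ (2δ|Im z| + δ²)‖u‖². -/
open scoped ComplexInnerProductSpace

private lemma key_norm {H : Type*} [NormedAddCommGroup H] [InnerProductSpace ℂ H] [CompleteSpace H]
    (B : H →L[ℂ] H) (hB : IsSelfAdjoint B) {r : ℝ} (hr : 0 < r)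
    (h : ∀ μ ∈ spectrum ℂ B, r ≤ ‖μ‖) (u : H) : r * ‖u‖ ≤ ‖B u‖ := by
  have h0 : (0 : ℂ) ∉ spectrum ℂ B := by
    intro h0
    simpa using hr.trans_le (h 0 h0)
  have hU : IsUnit B := spectrum.zero_notMem_iff ℂ |>.mp h0
  obtain ⟨U, rfl⟩ := hU
  set C : H →L[ℂ] H := ↑U⁻¹ with hC
  have hUstar : star U = U := Units.ext (by simpa [Units.coe_star] using hB.star_eq)
  have hCsa : IsSelfAdjoint C := by
    rw [IsSelfAdjoint, hC, ← Units.coe_star_inv, hUstar]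
  have hspecC : ∀ ν ∈ spectrum ℂ C, ‖ν‖₊ ≤ (show NNReal from ⟨r, hr.le⟩)⁻¹ := by
    intro ν hν
    rw [hC, ← spectrum.map_inv, Set.mem_inv] at hν
    have h1 : r ≤ ‖ν⁻¹‖ := h _ hν
    have hν0 : ν ≠ 0 := by
      intro h'
      rw [h'] at h1
      simp at h1
      linarith
    rw [← NNReal.coe_le_coe]
    rw [norm_inv] at h1
    have : ‖ν‖ ≤ r⁻¹ := by
      exact (le_inv_comm₀ hr (norm_pos_iff.mpr hν0)).mp h1
    exact this
  have hnorm : ‖C‖₊ ≤ (show NNReal from ⟨r, hr.le⟩)⁻¹ := by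
    rw [← ENNReal.coe_le_coe, ← hCsa.spectralRadius_eq_nnnorm]
    exact iSup₂_le fun ν hν => ENNReal.coe_le_coe.mpr (hspecC ν hν)
  have key : ‖u‖ ≤ r⁻¹ * ‖(U : H →L[ℂ] H) u‖ := by
    calc ‖u‖ = ‖C ((U : H →L[ℂ] H) u)‖ := by
          rw [hC, ← ContinuousLinearMap.comp_apply, ← ContinuousLinearMap.mul_def]
          simp
      _ ≤ ‖C‖ * ‖(U : H →L[ℂ] H) u‖ := C.le_opNorm _
      _ ≤ r⁻¹ * ‖(U : H →L[ℂ] H) u‖ := by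
          have : ‖C‖ ≤ r⁻¹ := by exact_mod_cast hnorm
          exact mul_le_mul_of_nonneg_right this (norm_nonneg _)
  have := mul_le_mul_of_nonneg_left key hr.le
  rwa [← mul_assoc, mul_inv_cancel₀ hr.ne', one_mul] at this

private lemma re_inner_eq {H : Type*} [NormedAddCommGroup H] [InnerProductSpace ℂ H]
    (z : ℂ) (u v : H) :
    (⟪v - z • u, v - (starRingEnd ℂ z) • u⟫).re
      = ‖v - (z.re : ℂ) • u‖ ^ 2 - z.im ^ 2 * ‖u‖ ^ 2 := by
  have h1 : (‖v - (z.re : ℂ) • u‖ : ℝ) ^ 2 = (⟪v - (z.re:ℂ)•u, v - (z.re:ℂ)•u⟫).re := by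
    rw [← @inner_self_eq_norm_sq ℂ, RCLike.re_to_complex]
  have h2 : (‖u‖ : ℝ) ^ 2 = (⟪u, u⟫ : ℂ).re := by
    rw [← @inner_self_eq_norm_sq ℂ, RCLike.re_to_complex]
  rw [h1, h2]
  simp only [inner_sub_left, inner_sub_right, inner_smul_left, inner_smul_right]
  have hs : (⟪v, v⟫ : ℂ).im = 0 := by rw [← RCLike.im_to_complex]; exact inner_self_im v
  have ht : (⟪u, u⟫ : ℂ).im = 0 := by rw [← RCLike.im_to_complex]; exact inner_self_im u
  have him : (⟪u, v⟫ : ℂ).im = -(⟪v, u⟫ : ℂ).im := by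
    have h := congrArg Complex.im (inner_conj_symm (𝕜 := ℂ) u v)
    rw [Complex.conj_im] at h
    linarith
  simp only [Complex.sub_re, Complex.sub_im, Complex.mul_re, Complex.mul_im, Complex.conj_re,
    Complex.conj_im, Complex.ofReal_re, Complex.ofReal_im, hs, ht, him]
  ring

/-- If `A` is a bounded self-adjoint operator whose spectrum misses the interval
`[Re z − |Im z| − δ, Re z + |Im z| + δ]`, then for every `u`,
`Re⟨(A − z)u, (A − z̄)u⟩ ≥ (2δ|Im z| + δ²)‖u‖²`. -/
theorem stmt1 {H : Type*} [NormedAddCommGroup H] [InnerProductSpace ℂ H] [CompleteSpace H]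
    (A : H →L[ℂ] H) (hA : IsSelfAdjoint A) (z : ℂ) (δ : ℝ) (hδ : 0 < δ)
    (hspec : ∀ x ∈ Set.Icc (z.re - |z.im| - δ) (z.re + |z.im| + δ),
      (x : ℂ) ∉ spectrum ℂ A) :
    ∀ u : H, (2 * δ * |z.im| + δ ^ 2) * ‖u‖ ^ 2 ≤
      (⟪A u - z • u, A u - (starRingEnd ℂ z) • u⟫).re := by
  intro u
  set r : ℝ := |z.im| + δ with hr
  have hr0 : 0 < r := by positivity
  set B : H →L[ℂ] H := A - algebraMap ℂ (H →L[ℂ] H) (z.re : ℂ) with hB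
  have hBsa : IsSelfAdjoint B := by
    rw [hB]
    refine hA.sub ?_
    rw [IsSelfAdjoint, ← algebraMap_star_comm, RCLike.star_def, Complex.conj_ofReal]
  have hspecB : ∀ μ ∈ spectrum ℂ B, r ≤ ‖μ‖ := by
    intro μ hμ
    rw [hB, ← spectrum.sub_singleton_eq] at hμ
    obtain ⟨lam, hlam, w, hw, rfl⟩ := hμ
    rw [Set.mem_singleton_iff] at hw
    subst hw
    have hre : lam = (lam.re : ℂ) := hA.mem_spectrum_eq_re hlam
    by_contra hlt
    push_neg at hlt
    refine hspec lam.re ?_ (hre ▸ hlam)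
    have : ‖lam - (z.re : ℂ)‖ = |lam.re - z.re| := by
      rw [hre]
      rw [← Complex.ofReal_sub, Complex.norm_real]
      simp [Real.norm_eq_abs]
    rw [this] at hlt
    rw [abs_sub_lt_iff] at hlt
    constructor <;> [skip; skip] <;> rw [hr] at hlt <;> linarith [hlt.1, hlt.2]
  have hkey : r * ‖u‖ ≤ ‖B u‖ := key_norm B hBsa hr0 hspecB u
  have hBu : B u = A u - (z.re : ℂ) • u := by
    rw [hB]
    simp [Algebra.algebraMap_eq_smul_one]
  have hid := re_inner_eq z u (A u)
  rw [← hBu] at hid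
  rw [hid]
  have hsq : (r * ‖u‖) ^ 2 ≤ ‖B u‖ ^ 2 := by
    have h1 : 0 ≤ r * ‖u‖ := by positivity
    nlinarith
  have habs : z.im ^ 2 = |z.im| ^ 2 := (sq_abs z.im).symm
  rw [habs]
  rw [hr] at hsq
  nlinarith [hsq, sq_nonneg ‖u‖, abs_nonneg z.im]
end

section
/- Let A be a bounded self-adjoint operator on a complex Hilbert space H and let L be an n-dimensional subspace of H with basis of unit vectors e₁,…,eₙ; let M(z) and β be as defined in the context. Let z ∈ ℂ and δ > 0 be such that Spec(A) ∩ [Re z − |Im z| − δ, Re z + |Im z| + δ] = ∅. Then for every vector u ∈ ℂⁿ, ‖M(z)u‖ ≥ (2δ|Im z| + δ²)β²‖u‖; in particular M(z) is invertible and ‖M(z)⁻¹‖ ≤ ((2δ|Im z| + δ²)β²)⁻¹. -/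
open scoped ComplexInnerProductSpace

lemma gap_aux {H : Type*} [NormedAddCommGroup H] [InnerProductSpace ℂ H] [CompleteSpace H]
    (A : H →L[ℂ] H) (hA : IsSelfAdjoint A) (c r : ℝ) (v : H)
    (h1 : 0 ≤ Complex.re ⟪(((A - algebraMap ℝ (H →L[ℂ] H) c) ^ 2
      - algebraMap ℝ (H →L[ℂ] H) (r ^ 2) : H →L[ℂ] H)) v, v⟫) :
    r ^ 2 * ‖v‖ ^ 2 ≤ ‖A v - (c : ℂ) • v‖ ^ 2 := by
  have hB : IsSelfAdjoint (A - algebraMap ℝ (H →L[ℂ] H) c) :=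
    hA.sub (IsSelfAdjoint.algebraMap _ (isSelfAdjoint_iff.mpr rfl))
  have hBv : (A - algebraMap ℝ (H →L[ℂ] H) c) v = A v - (c : ℂ) • v := by
    simp [Algebra.algebraMap_eq_smul_one, algebraMap_smul]
  have hsym : ⟪(A - algebraMap ℝ (H →L[ℂ] H) c) ((A - algebraMap ℝ (H →L[ℂ] H) c) v), v⟫
      = ⟪(A - algebraMap ℝ (H →L[ℂ] H) c) v, (A - algebraMap ℝ (H →L[ℂ] H) c) v⟫ :=
    hB.isSymmetric _ v
  rw [ContinuousLinearMap.sub_apply, pow_two, ContinuousLinearMap.mul_apply,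
    inner_sub_left, Complex.sub_re, hsym, hBv] at h1
  have h2 : Complex.re ⟪(algebraMap ℝ (H →L[ℂ] H) (r ^ 2)) v, v⟫ = r ^ 2 * ‖v‖ ^ 2 := by
    have := inner_self_eq_norm_sq (𝕜 := ℂ) v
    rw [RCLike.re_to_complex] at this
    rw [Algebra.algebraMap_eq_smul_one, ContinuousLinearMap.smul_apply,
      ContinuousLinearMap.one_apply,
      RCLike.real_smul_eq_coe_smul (K := ℂ), inner_smul_real_left]
    simp [Complex.smul_re, this, ← Complex.ofReal_pow]
  have h3 := inner_self_eq_norm_sq (𝕜 := ℂ) (A v - (c : ℂ) • v)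
  rw [RCLike.re_to_complex] at h3
  rw [h2, h3] at h1
  linarith

lemma gap_bound {H : Type*} [NormedAddCommGroup H] [InnerProductSpace ℂ H] [CompleteSpace H]
    (A : H →L[ℂ] H) (hA : IsSelfAdjoint A) (c r : ℝ)
    (hs : ∀ x : ℝ, (x : ℂ) ∈ spectrum ℂ A → r ^ 2 ≤ (x - c) ^ 2) (v : H) :
    r ^ 2 * ‖v‖ ^ 2 ≤ ‖A v - (c : ℂ) • v‖ ^ 2 := by
  have h0 : 0 ≤ cfc (fun x : ℝ => (x - c) ^ 2 - r ^ 2) A := by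
    refine cfc_nonneg (fun x hx => sub_nonneg.2 (hs x ?_))
    have : algebraMap ℝ ℂ x ∈ spectrum ℂ A := spectrum.algebraMap_mem ℂ hx
    simpa using this
  have heq : cfc (fun x : ℝ => (x - c) ^ 2 - r ^ 2) A
      = (A - algebraMap ℝ (H →L[ℂ] H) c) ^ 2 - algebraMap ℝ (H →L[ℂ] H) (r ^ 2) := by
    rw [cfc_sub (fun x : ℝ => (x - c) ^ 2) (fun _ : ℝ => r ^ 2) A,
      cfc_pow (fun x : ℝ => x - c) 2 A,
      cfc_sub (fun x : ℝ => x) (fun _ : ℝ => c) A, cfc_id' ℝ A, cfc_const c A,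
      cfc_const (r ^ 2) A]
  rw [heq] at h0
  have h1 := ((ContinuousLinearMap.nonneg_iff_isPositive _).1 h0).inner_nonneg_left v
  exact gap_aux A hA c r v (Complex.le_def.mp h1).1

/-- If the spectrum of the bounded self-adjoint operator `A` misses the interval
`[Re z − |Im z| − δ, Re z + |Im z| + δ]`, then `‖M(z)u‖ ≥ (2δ|Im z| + δ²)β²‖u‖` for all
`u ∈ ℂⁿ`; in particular `M(z)` is invertible with `‖M(z)⁻¹‖ ≤ ((2δ|Im z| + δ²)β²)⁻¹`. -/
theorem stmt2 {H : Type*} [NormedAddCommGroup H] [InnerProductSpace ℂ H] [CompleteSpace H]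
    (A : H →L[ℂ] H) (hA : IsSelfAdjoint A) (n : ℕ)
    (e : Fin n → H) (he : ∀ j, ‖e j‖ = 1) (hli : LinearIndependent ℂ e)
    (β : ℝ) (hβ : 0 < β)
    (hβ' : ∀ c : Fin n → ℂ, β * Real.sqrt (∑ j, ‖c j‖ ^ 2) ≤ ‖∑ j, c j • e j‖)
    (A0 A1 A2 : Matrix (Fin n) (Fin n) ℂ)
    (hA0 : ∀ j k, A0 j k = ⟪A (e k), A (e j)⟫)
    (hA1 : ∀ j k, A1 j k = ⟪e k, A (e j)⟫)
    (hA2 : ∀ j k, A2 j k = ⟪e k, e j⟫)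
    (z : ℂ) (δ : ℝ) (hδ : 0 < δ)
    (hspec : ∀ x ∈ Set.Icc (z.re - |z.im| - δ) (z.re + |z.im| + δ),
      (x : ℂ) ∉ spectrum ℂ A) :
    (∀ u : EuclideanSpace ℂ (Fin n),
        (2 * δ * |z.im| + δ ^ 2) * β ^ 2 * ‖u‖ ≤
          ‖Matrix.toEuclideanCLM (𝕜 := ℂ) (A0 - (2 * z) • A1 + z ^ 2 • A2) u‖) ∧
      IsUnit (A0 - (2 * z) • A1 + z ^ 2 • A2) ∧
      ‖Matrix.toEuclideanCLM (𝕜 := ℂ) (A0 - (2 * z) • A1 + z ^ 2 • A2)⁻¹‖ ≤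
        ((2 * δ * |z.im| + δ ^ 2) * β ^ 2)⁻¹ := by
  set M : Matrix (Fin n) (Fin n) ℂ := A0 - (2 * z) • A1 + z ^ 2 • A2 with hM
  set C : ℝ := (2 * δ * |z.im| + δ ^ 2) * β ^ 2 with hCdef
  have hC : 0 < C := by positivity
  -- spectral gap hypothesis for gap_bound
  have hs : ∀ x : ℝ, (x : ℂ) ∈ spectrum ℂ A → (|z.im| + δ) ^ 2 ≤ (x - z.re) ^ 2 := by
    intro x hx
    have hx' : x ∉ Set.Icc (z.re - |z.im| - δ) (z.re + |z.im| + δ) :=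
      fun hmem => hspec x hmem hx
    rw [Set.mem_Icc, not_and_or, not_le, not_le] at hx'
    rcases hx' with h | h <;> nlinarith [abs_nonneg z.im]
  -- the key lower bound on the quadratic form
  have hlow : ∀ u : EuclideanSpace ℂ (Fin n), C * ‖u‖ ^ 2
      ≤ Complex.re (inner ℂ u (Matrix.toEuclideanCLM (𝕜 := ℂ) M u)) := by
    intro u
    set v : H := ∑ k, (starRingEnd ℂ) (u k) • e k with hv
    -- the quadratic-form identity
    have hMu : ∀ j, (Matrix.toEuclideanCLM (𝕜 := ℂ) M u) j
        = ∑ k, M j k * u k := fun j => rfl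
    have key : (inner ℂ u (Matrix.toEuclideanCLM (𝕜 := ℂ) M u) : ℂ)
        = ⟪A v, A v⟫ - 2 * z * ⟪v, A v⟫ + z ^ 2 * ⟪v, v⟫ := by
      calc (inner ℂ u (Matrix.toEuclideanCLM (𝕜 := ℂ) M u) : ℂ)
          = ∑ j, ∑ k, (starRingEnd ℂ) (u j) * u k *
              (⟪A (e k), A (e j)⟫ - 2 * z * ⟪e k, A (e j)⟫ + z ^ 2 * ⟪e k, e j⟫) := by
            rw [PiLp.inner_apply]
            refine Finset.sum_congr rfl fun j _ => ?_
            rw [RCLike.inner_apply, hMu j, Finset.sum_mul]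
            refine Finset.sum_congr rfl fun k _ => ?_
            simp only [hM, Matrix.sub_apply, Matrix.add_apply, Matrix.smul_apply, hA0, hA1,
              hA2, smul_eq_mul]
            ring
        _ = _ := by
            simp only [hv, map_sum, map_smul, sum_inner, inner_sum, inner_smul_left,
              inner_smul_right, Complex.conj_conj, Finset.mul_sum, smul_eq_mul]
            rw [← Finset.sum_sub_distrib, ← Finset.sum_add_distrib]
            refine Finset.sum_congr rfl fun k _ => ?_
            rw [← Finset.sum_sub_distrib, ← Finset.sum_add_distrib]
            refine Finset.sum_congr rfl fun j _ => ?_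
            ring
    -- ⟪v, A v⟫ is real
    have hAvv : (⟪A v, v⟫ : ℂ) = ⟪v, A v⟫ := hA.isSymmetric v v
    have hγ : (⟪v, A v⟫ : ℂ).im = 0 := by
      have h2 : (starRingEnd ℂ) ⟪v, A v⟫ = ⟪v, A v⟫ := by
        rw [inner_conj_symm, hAvv]
      exact Complex.conj_eq_iff_im.mp h2
    have hα : (⟪A v, A v⟫ : ℂ) = ((‖A v‖ : ℂ)) ^ 2 := inner_self_eq_norm_sq_to_K _
    have hν : (⟪v, v⟫ : ℂ) = ((‖v‖ : ℂ)) ^ 2 := inner_self_eq_norm_sq_to_K _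
    -- norm expansion
    have hnorm : ‖A v - (z.re : ℂ) • v‖ ^ 2
        = ‖A v‖ ^ 2 - 2 * (z.re * (⟪v, A v⟫ : ℂ).re) + z.re ^ 2 * ‖v‖ ^ 2 := by
      rw [@norm_sub_sq ℂ]
      rw [inner_smul_right, hAvv]
      simp [norm_smul, Complex.mul_re, Complex.ofReal_re, Complex.ofReal_im, hγ, Complex.norm_real]
      rw [mul_pow, sq_abs]
    have hre : Complex.re (inner ℂ u (Matrix.toEuclideanCLM (𝕜 := ℂ) M u))
        = ‖A v - (z.re : ℂ) • v‖ ^ 2 - z.im ^ 2 * ‖v‖ ^ 2 := by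
      rw [key, hnorm]
      simp [hα, hν, Complex.add_re, Complex.sub_re, Complex.mul_re, hγ,
        ← Complex.ofReal_pow, Complex.sq_norm]
      have : (z ^ 2).re = z.re ^ 2 - z.im ^ 2 := by
        rw [sq, Complex.mul_re]; ring
      rw [this]; ring
    -- gap bound
    have hgap := gap_bound A hA z.re (|z.im| + δ) hs v
    -- norm comparison
    have hβu : β * ‖u‖ ≤ ‖v‖ := by
      have h := hβ' (fun k => (starRingEnd ℂ) (u k))
      rw [EuclideanSpace.norm_eq u]
      simpa using h
    have hv2 : β ^ 2 * ‖u‖ ^ 2 ≤ ‖v‖ ^ 2 := by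
      have := pow_le_pow_left₀ (by positivity) hβu 2
      rw [mul_pow] at this
      exact this
    rw [hre, hCdef]
    have habs : |z.im| ^ 2 = z.im ^ 2 := sq_abs z.im
    have hcoef : (0:ℝ) ≤ 2 * δ * |z.im| + δ ^ 2 := by positivity
    have hstep := mul_le_mul_of_nonneg_left hv2 hcoef
    nlinarith [hgap, hstep, habs]
  -- part 1
  have part1 : ∀ u : EuclideanSpace ℂ (Fin n),
      C * ‖u‖ ≤ ‖Matrix.toEuclideanCLM (𝕜 := ℂ) M u‖ := by
    intro u
    rcases eq_or_ne u 0 with rfl | hu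
    · simp
    have hun : 0 < ‖u‖ := norm_pos_iff.mpr hu
    have h1 := hlow u
    have h2 : Complex.re (inner ℂ u (Matrix.toEuclideanCLM (𝕜 := ℂ) M u))
        ≤ ‖u‖ * ‖Matrix.toEuclideanCLM (𝕜 := ℂ) M u‖ := by
      refine le_trans (Complex.re_le_norm _) ?_
      exact norm_inner_le_norm u _
    nlinarith [h1, h2]
  -- injectivity, hence invertibility
  have hker : ∀ u : EuclideanSpace ℂ (Fin n),
      Matrix.toEuclideanCLM (𝕜 := ℂ) M u = 0 → u = 0 := by
    intro u hu
    have := part1 u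
    rw [hu, norm_zero] at this
    have : ‖u‖ ≤ 0 := by nlinarith
    exact norm_le_zero_iff.mp this
  have hunit : IsUnit M := by
    rw [← Matrix.mulVec_injective_iff_isUnit]
    intro x y hxy
    have h0 : Matrix.mulVec M (x - y) = 0 := by
      rw [Matrix.mulVec_sub, hxy, sub_self]
    have : Matrix.toEuclideanCLM (𝕜 := ℂ) M ((WithLp.equiv 2 _).symm (x - y)) = 0 := by
      show Matrix.toEuclideanCLM (𝕜 := ℂ) M (WithLp.toLp 2 (x - y)) = 0
      rw [Matrix.toEuclideanCLM_toLp, h0]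
      rfl
    have := hker _ this
    have hxy0 : x - y = 0 := by
      simpa using congrArg (WithLp.equiv 2 (Fin n → ℂ)) this
    exact sub_eq_zero.mp hxy0
  refine ⟨part1, hunit, ?_⟩
  -- inverse bound
  have hMM : M * M⁻¹ = 1 := Matrix.mul_nonsing_inv _ ((Matrix.isUnit_iff_isUnit_det M).mp hunit)
  refine ContinuousLinearMap.opNorm_le_bound _ (inv_nonneg.2 hC.le) fun w => ?_
  have h1 := part1 (Matrix.toEuclideanCLM (𝕜 := ℂ) M⁻¹ w)
  have h2 : Matrix.toEuclideanCLM (𝕜 := ℂ) M (Matrix.toEuclideanCLM (𝕜 := ℂ) M⁻¹ w) = w := by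
    calc Matrix.toEuclideanCLM (𝕜 := ℂ) M (Matrix.toEuclideanCLM (𝕜 := ℂ) M⁻¹ w)
        = (Matrix.toEuclideanCLM (𝕜 := ℂ) M * Matrix.toEuclideanCLM (𝕜 := ℂ) M⁻¹) w := rfl
      _ = Matrix.toEuclideanCLM (𝕜 := ℂ) (M * M⁻¹) w := by rw [map_mul]
      _ = w := by rw [hMM, map_one]; rfl
  rw [h2] at h1
  calc ‖Matrix.toEuclideanCLM (𝕜 := ℂ) M⁻¹ w‖
      = C⁻¹ * (C * ‖Matrix.toEuclideanCLM (𝕜 := ℂ) M⁻¹ w‖) := by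
        field_simp
    _ ≤ C⁻¹ * ‖w‖ := by
        exact mul_le_mul_of_nonneg_left h1 (inv_nonneg.2 hC.le)
end

section
/- (Theorem 2.2) Let A be a bounded self-adjoint operator on a complex Hilbert space H, and let L be an n-dimensional subspace of H with basis of unit vectors e₁,…,eₙ; let M(z) and β be as defined in the context. Let B be a singular (non-invertible) n×n complex matrix, let z ∈ ℂ, and let α_z ∈ ℝ satisfy α_z ≥ ‖M(z) − B‖. If δ > 0 is such that (δ² + 2δ|Im z|)β² > α_z, then Spec(A) ∩ [Re z − |Im z| − δ, Re z + |Im z| + δ] ≠ ∅. -/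
open scoped ComplexInnerProductSpace

lemma aux_pos {H : Type*} [NormedAddCommGroup H] [InnerProductSpace ℂ H] [CompleteSpace H]
    [Nontrivial H]
    (A : H →L[ℂ] H) (hA : IsSelfAdjoint A) (c m : ℝ)
    (hspec : ∀ t ∈ spectrum ℂ A, m ^ 2 ≤ (t.re - c) ^ 2) (u : H) :
    m ^ 2 * ‖u‖ ^ 2 ≤ ‖A u - (c : ℂ) • u‖ ^ 2 := by
  set T : H →L[ℂ] H := A - algebraMap ℂ _ (c : ℂ) with hTdef
  have hT : IsSelfAdjoint T := by
    refine hA.sub ?_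
    exact IsSelfAdjoint.algebraMap _ (by simp [isSelfAdjoint_iff, Complex.conj_ofReal])
  set S : H →L[ℂ] H := T ^ 2 - algebraMap ℂ _ ((m : ℂ) ^ 2) with hSdef
  have hS : IsSelfAdjoint S := by
    refine (hT.pow 2).sub ?_
    exact IsSelfAdjoint.algebraMap _ (by rw [isSelfAdjoint_iff, ← Complex.ofReal_pow]; exact Complex.conj_ofReal _)
  have hSaeval : S = Polynomial.aeval A
      ((Polynomial.X - Polynomial.C (c : ℂ)) ^ 2 - Polynomial.C ((m : ℂ) ^ 2)) := by
    simp [hSdef, hTdef, Polynomial.aeval_X, Polynomial.aeval_C, map_sub, map_pow]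
  have hspecS : ∀ x ∈ spectrum ℝ S, 0 ≤ x := by
    intro x hx
    have hx' : (algebraMap ℝ ℂ x) ∈ spectrum ℂ S := spectrum.algebraMap_mem ℂ hx
    rw [hSaeval, spectrum.map_polynomial_aeval_of_nonempty A _ (spectrum.nonempty A)] at hx'
    obtain ⟨t, ht, htx⟩ := hx'
    have htre : t = t.re := hA.mem_spectrum_eq_re ht
    have hle := hspec t ht
    simp only [Polynomial.eval_sub, Polynomial.eval_pow, Polynomial.eval_X,
      Polynomial.eval_C] at htx
    rw [htre] at htx
    have : ((algebraMap ℝ ℂ) x) = (((t.re - c) ^ 2 - m ^ 2 : ℝ) : ℂ) := by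
      rw [← htx]; push_cast; ring
    have hxr : x = (t.re - c) ^ 2 - m ^ 2 := by
      rw [Complex.coe_algebraMap] at this; exact_mod_cast this
    linarith
  have hSpos : (0 : H →L[ℂ] H) ≤ S :=
    (StarOrderedRing.nonneg_iff_spectrum_nonneg (R := ℝ) S hS).mpr hspecS
  have hpos := (ContinuousLinearMap.nonneg_iff_isPositive S).mp hSpos
  have h2 := hpos.inner_nonneg_right u
  have hTu : T u = A u - (c : ℂ) • u := by
    simp [hTdef, ContinuousLinearMap.sub_apply, Algebra.algebraMap_eq_smul_one]
  have hSu : S u = T (T u) - ((m : ℂ) ^ 2) • u := by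
    simp [hSdef, ContinuousLinearMap.sub_apply, Algebra.algebraMap_eq_smul_one, pow_two,
      ContinuousLinearMap.mul_apply]
  have hkey : Complex.re ⟪u, S u⟫ = ‖T u‖ ^ 2 - m ^ 2 * ‖u‖ ^ 2 := by
    rw [hSu, inner_sub_right, inner_smul_right]
    have h3 : ⟪u, T (T u)⟫ = ⟪T u, T u⟫ := (hT.isSymmetric u (T u)).symm
    rw [h3, inner_self_eq_norm_sq_to_K, inner_self_eq_norm_sq_to_K]
    simp [Complex.sub_re, Complex.mul_re, ← Complex.ofReal_pow]
  have h2' : (0:ℝ) ≤ (⟪u, S u⟫ : ℂ).re := by simpa using (Complex.le_def.mp h2).1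
  rw [hkey] at h2'
  rw [← hTu]
  linarith
/-- Theorem 2.2: if `B` is a singular matrix with `‖M(z) − B‖ ≤ α_z` and
`(δ² + 2δ|Im z|)β² > α_z` for some `δ > 0`, then the spectrum of `A` meets the
interval `[Re z − |Im z| − δ, Re z + |Im z| + δ]`. -/
theorem stmt3 {H : Type*} [NormedAddCommGroup H] [InnerProductSpace ℂ H] [CompleteSpace H]
    (A : H →L[ℂ] H) (hA : IsSelfAdjoint A) (n : ℕ)
    (e : Fin n → H) (he : ∀ j, ‖e j‖ = 1) (hli : LinearIndependent ℂ e)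
    (β : ℝ) (hβ : 0 < β)
    (hβ' : ∀ c : Fin n → ℂ, β * Real.sqrt (∑ j, ‖c j‖ ^ 2) ≤ ‖∑ j, c j • e j‖)
    (A0 A1 A2 : Matrix (Fin n) (Fin n) ℂ)
    (hA0 : ∀ j k, A0 j k = ⟪A (e k), A (e j)⟫)
    (hA1 : ∀ j k, A1 j k = ⟪e k, A (e j)⟫)
    (hA2 : ∀ j k, A2 j k = ⟪e k, e j⟫)
    (B : Matrix (Fin n) (Fin n) ℂ) (hB : ¬ IsUnit B)
    (z : ℂ) (αz : ℝ)
    (hα : ‖Matrix.toEuclideanCLM (𝕜 := ℂ) (A0 - (2 * z) • A1 + z ^ 2 • A2 - B)‖ ≤ αz)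
    (δ : ℝ) (hδ : 0 < δ) (hδ' : αz < (δ ^ 2 + 2 * δ * |z.im|) * β ^ 2) :
    ∃ x ∈ Set.Icc (z.re - |z.im| - δ) (z.re + |z.im| + δ), (x : ℂ) ∈ spectrum ℂ A := by
  by_contra hcon
  push_neg at hcon
  -- kernel vector of B
  have hdet : B.det = 0 := by
    by_contra h
    exact hB ((Matrix.isUnit_iff_isUnit_det B).mpr (isUnit_iff_ne_zero.mpr h))
  obtain ⟨v, hv0, hvB⟩ := (Matrix.exists_mulVec_eq_zero_iff).mpr hdet
  obtain ⟨j₀, hj₀⟩ := Function.ne_iff.mp hv0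
  have hj₀' : v j₀ ≠ 0 := hj₀
  have hnt : Nontrivial H := by
    refine ⟨e j₀, 0, fun h => ?_⟩
    have := he j₀; rw [h] at this; simp at this
  set c : ℝ := z.re with hc
  set b : ℝ := z.im with hb
  set m : ℝ := |b| + δ with hm
  set M : Matrix (Fin n) (Fin n) ℂ := A0 - (2 * z) • A1 + z ^ 2 • A2 with hM
  set u : H := ∑ j, (starRingEnd ℂ) (v j) • e j with hu
  set N : ℝ := ∑ j, ‖v j‖ ^ 2 with hN
  have hNpos : 0 < N := by
    have h1 : 0 < ‖v j₀‖ ^ 2 := pow_pos (norm_pos_iff.mpr hj₀') 2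
    have h2 : ‖v j₀‖ ^ 2 ≤ N :=
      Finset.single_le_sum (f := fun j => ‖v j‖ ^ 2) (fun i _ => by positivity)
        (Finset.mem_univ j₀)
    linarith
  -- entrywise identity
  have hMe : ∀ j k, M j k
      = ⟪A (e k) - (starRingEnd ℂ) z • e k, A (e j) - z • e j⟫ := by
    intro j k
    have hsym : ⟪A (e k), e j⟫ = ⟪e k, A (e j)⟫ := hA.isSymmetric (e k) (e j)
    simp only [hM, Matrix.sub_apply, Matrix.add_apply, Matrix.smul_apply, hA0, hA1, hA2]
    rw [inner_sub_left, inner_sub_right, inner_sub_right, inner_smul_left, inner_smul_right,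
      inner_smul_right, inner_smul_left, hsym]
    simp only [RingHom.id_apply, Complex.conj_conj, starRingEnd_self_apply, smul_eq_mul]
    ring
  -- expansion of A u - w • u
  have hlin : ∀ w : ℂ, A u - w • u = ∑ j, (starRingEnd ℂ) (v j) • (A (e j) - w • e j) := by
    intro w
    rw [hu, map_sum, Finset.smul_sum, ← Finset.sum_sub_distrib]
    refine Finset.sum_congr rfl fun j _ => ?_
    rw [map_smul, smul_sub, smul_comm]
  -- the quadratic form identity
  have hq : ⟪A u - (starRingEnd ℂ) z • u, A u - z • u⟫
      = dotProduct (star v) (M.mulVec v) := by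
    rw [hlin, hlin, sum_inner]
    simp only [inner_sum, inner_smul_left, inner_smul_right, RingHom.id_apply,
      Complex.conj_conj]
    rw [Finset.sum_comm]
    simp only [dotProduct, Matrix.mulVec, Pi.star_apply, Finset.mul_sum]
    refine Finset.sum_congr rfl fun j _ => Finset.sum_congr rfl fun k _ => ?_
    rw [hMe j k, Complex.star_def]
    ring
  -- bound ‖q‖ ≤ αz * N
  have hqbound : ‖⟪A u - (starRingEnd ℂ) z • u, A u - z • u⟫‖ ≤ αz * N := by
    rw [hq]
    have h0 : dotProduct (star v) (M.mulVec v)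
        = dotProduct (star v) ((M - B).mulVec v) := by
      rw [Matrix.sub_mulVec, dotProduct_sub, hvB, dotProduct_zero, sub_zero]
    rw [h0]
    set x : EuclideanSpace ℂ (Fin n) := (WithLp.equiv 2 _).symm v with hx
    have h1 : dotProduct (star v) ((M - B).mulVec v)
        = ⟪x, Matrix.toEuclideanCLM (𝕜 := ℂ) (M - B) x⟫ := by
      rw [EuclideanSpace.inner_eq_star_dotProduct]
      simp [hx, Matrix.toLin'_apply, Matrix.sub_mulVec, dotProduct_sub]
      rw [dotProduct_comm (M.mulVec v), dotProduct_comm (B.mulVec v)]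
    have hxnorm : ‖x‖ ^ 2 = N := by
      rw [EuclideanSpace.norm_eq, Real.sq_sqrt (by positivity)]
      rfl
    rw [h1]
    calc ‖⟪x, Matrix.toEuclideanCLM (𝕜 := ℂ) (M - B) x⟫‖
        ≤ ‖x‖ * ‖Matrix.toEuclideanCLM (𝕜 := ℂ) (M - B) x‖ := norm_inner_le_norm _ _
      _ ≤ ‖x‖ * (‖Matrix.toEuclideanCLM (𝕜 := ℂ) (M - B)‖ * ‖x‖) := by
          gcongr
          exact (Matrix.toEuclideanCLM (𝕜 := ℂ) (M - B)).le_opNorm x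
      _ ≤ ‖x‖ * (αz * ‖x‖) := by
          have : (0:ℝ) ≤ ‖x‖ := norm_nonneg _
          gcongr
      _ = αz * ‖x‖ ^ 2 := by ring
      _ = αz * N := by rw [hxnorm]
  -- spectral bound
  have hspec : ∀ t ∈ spectrum ℂ A, m ^ 2 ≤ (t.re - c) ^ 2 := by
    intro t ht
    have htre : t = t.re := hA.mem_spectrum_eq_re ht
    have hnot : t.re ∉ Set.Icc (c - |b| - δ) (c + |b| + δ) :=
      fun hmem => hcon t.re hmem (htre ▸ ht)
    rw [Set.mem_Icc, not_and_or, not_le, not_le] at hnot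
    rcases hnot with h | h <;> nlinarith [abs_nonneg b]
  have hposq : m ^ 2 * ‖u‖ ^ 2 ≤ ‖A u - (c : ℂ) • u‖ ^ 2 := aux_pos A hA c m hspec u
  -- real part computation
  have hre : (⟪A u - (starRingEnd ℂ) z • u, A u - z • u⟫ : ℂ).re
      = ‖A u - (c : ℂ) • u‖ ^ 2 - b ^ 2 * ‖u‖ ^ 2 := by
    have hz : z = (c : ℂ) + (b : ℂ) * Complex.I := (Complex.re_add_im z).symm
    have hzc : (starRingEnd ℂ) z = (c : ℂ) - (b : ℂ) * Complex.I := by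
      rw [hz]; simp [Complex.conj_ofReal]; ring
    set w : H := A u - (c : ℂ) • u with hw
    have e1 : A u - z • u = w - ((b : ℂ) * Complex.I) • u := by
      rw [hw, hz, add_smul]; abel
    have e2 : A u - (starRingEnd ℂ) z • u = w + ((b : ℂ) * Complex.I) • u := by
      rw [hw, hzc, sub_smul]; abel
    rw [e1, e2]
    simp only [inner_add_left, inner_sub_right, inner_smul_left, inner_smul_right]
    rw [← inner_conj_symm u w]
    have hwre : (⟪w, w⟫ : ℂ).re = ‖w‖ ^ 2 := by
      simpa using inner_self_eq_norm_sq (𝕜 := ℂ) w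
    have hwim : (⟪w, w⟫ : ℂ).im = 0 := by
      exact_mod_cast inner_self_im (𝕜 := ℂ) w
    have hure : (⟪u, u⟫ : ℂ).re = ‖u‖ ^ 2 := by
      simpa using inner_self_eq_norm_sq (𝕜 := ℂ) u
    have huim : (⟪u, u⟫ : ℂ).im = 0 := by
      exact_mod_cast inner_self_im (𝕜 := ℂ) u
    set x : ℂ := ⟪w, u⟫ with hxdef
    simp only [Complex.add_re, Complex.add_im, Complex.sub_re, Complex.sub_im,
      Complex.neg_re, Complex.neg_im, Complex.mul_re, Complex.mul_im, Complex.I_re,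
      Complex.I_im, Complex.ofReal_re, Complex.ofReal_im, Complex.conj_re, Complex.conj_im,
      map_mul, Complex.conj_I, Complex.conj_ofReal, mul_neg, neg_mul]
    simp only [hwre, hwim, hure, huim]
    ring
  -- norm lower bound for u
  have hun : β ^ 2 * N ≤ ‖u‖ ^ 2 := by
    have h := hβ' (fun j => (starRingEnd ℂ) (v j))
    have hsum : (∑ j, ‖(starRingEnd ℂ) (v j)‖ ^ 2) = N := by
      simp only [RCLike.norm_conj, hN]
    rw [hsum] at h
    have h2 : (β * Real.sqrt N) ^ 2 ≤ ‖u‖ ^ 2 := by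
      have hnn : 0 ≤ β * Real.sqrt N := by positivity
      exact pow_le_pow_left₀ hnn h 2
    calc β ^ 2 * N = (β * Real.sqrt N) ^ 2 := by
          rw [mul_pow, Real.sq_sqrt hNpos.le]
      _ ≤ ‖u‖ ^ 2 := h2
  -- final contradiction
  have h1 : (⟪A u - (starRingEnd ℂ) z • u, A u - z • u⟫ : ℂ).re
      ≤ ‖⟪A u - (starRingEnd ℂ) z • u, A u - z • u⟫‖ := by
    exact Complex.re_le_norm _
  have hmsq : m ^ 2 = b ^ 2 + 2 * δ * |b| + δ ^ 2 := by
    rw [hm, add_sq, sq_abs]; ring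
  have hδpos : (0:ℝ) < δ ^ 2 + 2 * δ * |b| := by positivity
  have key : αz * N < αz * N := by
    calc αz * N < ((δ ^ 2 + 2 * δ * |b|) * β ^ 2) * N :=
          mul_lt_mul_of_pos_right hδ' hNpos
      _ = (δ ^ 2 + 2 * δ * |b|) * (β ^ 2 * N) := by ring
      _ ≤ (δ ^ 2 + 2 * δ * |b|) * ‖u‖ ^ 2 :=
          mul_le_mul_of_nonneg_left hun hδpos.le
      _ = m ^ 2 * ‖u‖ ^ 2 - b ^ 2 * ‖u‖ ^ 2 := by rw [hmsq]; ring
      _ ≤ ‖A u - (c : ℂ) • u‖ ^ 2 - b ^ 2 * ‖u‖ ^ 2 := by linarith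
      _ = (⟪A u - (starRingEnd ℂ) z • u, A u - z • u⟫ : ℂ).re := hre.symm
      _ ≤ ‖⟪A u - (starRingEnd ℂ) z • u, A u - z • u⟫‖ := h1
      _ ≤ αz * N := hqbound
  exact lt_irrefl _ key
end

section
/- (Theorem 2.3) Let A be a bounded self-adjoint operator on a complex Hilbert space H, and let L be an n-dimensional subspace of H with basis of unit vectors e₁,…,eₙ; let A₀, A₁, A₂ and β be as defined in the context. Let Ã₀, Ã₁, Ã₂ be n×n complex matrices with ‖Aₚ − Ãₚ‖ ≤ εₚ for some εₚ ≥ 0, p = 0,1,2. If the matrix Ã₀ − 2ζÃ₁ + ζ²Ã₂ is singular for some ζ ∈ ℂ, then Spec(A) ∩ [Re ζ − δ̃, Re ζ + δ̃] ≠ ∅, where δ̃ = √(|Im ζ|² + β⁻²(|ζ|²ε₂ + 2|ζ|ε₁ + ε₀)). -/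
open scoped ComplexInnerProductSpace

lemma key0 {H : Type*} [NormedAddCommGroup H] [InnerProductSpace ℂ H] [CompleteSpace H]
    [Nontrivial H] (T : H →L[ℂ] H) (hT : IsSelfAdjoint T)
    (d : ℝ) (hd : 0 < d) (h : ∀ μ ∈ spectrum ℂ T, d ≤ ‖μ‖) (u : H) :
    d * ‖u‖ ≤ ‖T u‖ := by
  have hunit : IsUnit T := by
    refine spectrum.isUnit_of_zero_notMem ℂ fun h0 => ?_
    simpa using hd.trans_le (h 0 h0)
  set U := hunit.unit with hU
  have hUT : (U : H →L[ℂ] H) = T := hunit.unit_spec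
  set S : H →L[ℂ] H := ↑U⁻¹ with hSdef
  have hTS : T * S = 1 := by rw [← hUT, hSdef]; exact_mod_cast U.mul_inv
  have hST : S * T = 1 := by rw [← hUT, hSdef]; exact_mod_cast U.inv_mul
  have hS : IsSelfAdjoint S := by
    have h1 : star S * T = 1 := by
      calc star S * T = star (star T * S) := by simp [star_mul, hT.star_eq]
        _ = star (T * S) := by rw [hT.star_eq]
        _ = 1 := by rw [hTS]; simp
    calc star S = star S * (T * S) := by rw [hTS, mul_one]
      _ = (star S * T) * S := by rw [mul_assoc]
      _ = S := by rw [h1, one_mul]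
  have hSnorm : ‖S‖ ≤ d⁻¹ := by
    obtain ⟨z, hz, hzr⟩ := spectrum.exists_nnnorm_eq_spectralRadius S
    have hnorm : ‖S‖ = ‖z‖ := by
      rw [← hS.toReal_spectralRadius_complex_eq_norm, ← hzr]; simp
    have hz0 : z ≠ 0 := by
      rintro rfl
      exact spectrum.zero_notMem ℂ (U⁻¹).isUnit hz
    have hinv : (z⁻¹ : ℂ) ∈ spectrum ℂ T := by
      have := (spectrum.inv_mem_iff (r := Units.mk0 z hz0) (a := U⁻¹)).mp (by simpa using hz)
      simpa [hUT] using this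
    have hd' : d ≤ ‖z‖⁻¹ := by simpa [norm_inv] using h _ hinv
    rw [hnorm]
    have hzpos : 0 < ‖z‖ := norm_pos_iff.mpr hz0
    rw [← inv_inv ‖z‖]
    exact inv_anti₀ hd hd'
  have hu : u = S (T u) := by
    have := congrArg (fun f : H →L[ℂ] H => f u) hST
    simpa using this.symm
  calc d * ‖u‖ = d * ‖S (T u)‖ := by rw [← hu]
    _ ≤ d * (‖S‖ * ‖T u‖) := by
        have := S.le_opNorm (T u)
        nlinarith [norm_nonneg (T u)]
    _ ≤ d * (d⁻¹ * ‖T u‖) := by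
        have h1 : ‖S‖ * ‖T u‖ ≤ d⁻¹ * ‖T u‖ :=
          mul_le_mul_of_nonneg_right hSnorm (norm_nonneg _)
        exact mul_le_mul_of_nonneg_left h1 hd.le
    _ = ‖T u‖ := by field_simp

lemma key1 {H : Type*} [NormedAddCommGroup H] [InnerProductSpace ℂ H] {n : ℕ}
    (B : Matrix (Fin n) (Fin n) ℂ) (f g : Fin n → H)
    (hB : ∀ j k, B j k = ⟪f k, g j⟫) (c : Fin n → ℂ) :
    ∑ j, (starRingEnd ℂ) (c j) * (B.mulVec c) j
      = ⟪∑ k, (starRingEnd ℂ) (c k) • f k, ∑ j, (starRingEnd ℂ) (c j) • g j⟫ := by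
  rw [sum_inner]
  simp only [inner_sum, inner_smul_left, inner_smul_right, RingHom.id_apply,
    starRingEnd_self_apply, Matrix.mulVec, dotProduct]
  rw [Finset.sum_comm]
  refine Finset.sum_congr rfl fun j _ => ?_
  rw [Finset.mul_sum]
  refine Finset.sum_congr rfl fun k _ => ?_
  rw [hB j k]
  ring

lemma key2 {n : ℕ} (D : Matrix (Fin n) (Fin n) ℂ) (ε : ℝ)
    (hD : ‖Matrix.toEuclideanCLM (𝕜 := ℂ) D‖ ≤ ε)
    (c : Fin n → ℂ) (hc : ∑ j, ‖c j‖ ^ 2 = 1) :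
    ‖∑ j, (starRingEnd ℂ) (c j) * (D.mulVec c) j‖ ≤ ε := by
  set c' : EuclideanSpace ℂ (Fin n) := (WithLp.equiv 2 _).symm c with hc'
  have hnc : ‖c'‖ = 1 := by
    rw [EuclideanSpace.norm_eq]
    simpa [hc'] using Real.sqrt_eq_one.mpr hc
  have happ : Matrix.toEuclideanCLM (𝕜 := ℂ) D c' = (WithLp.equiv 2 _).symm (D.mulVec c) :=
    Matrix.toEuclideanCLM_toLp D c
  have hip : ⟪c', Matrix.toEuclideanCLM (𝕜 := ℂ) D c'⟫
      = ∑ j, (starRingEnd ℂ) (c j) * (D.mulVec c) j := by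
    rw [happ, PiLp.inner_apply]
    exact Finset.sum_congr rfl fun j _ => by simp [hc', mul_comm]
  calc ‖∑ j, (starRingEnd ℂ) (c j) * (D.mulVec c) j‖
      = ‖⟪c', Matrix.toEuclideanCLM (𝕜 := ℂ) D c'⟫‖ := by rw [hip]
    _ ≤ ‖c'‖ * ‖Matrix.toEuclideanCLM (𝕜 := ℂ) D c'‖ := norm_inner_le_norm _ _
    _ ≤ ‖c'‖ * (‖Matrix.toEuclideanCLM (𝕜 := ℂ) D‖ * ‖c'‖) :=
        mul_le_mul_of_nonneg_left ((Matrix.toEuclideanCLM (𝕜 := ℂ) D).le_opNorm c')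
          (norm_nonneg _)
    _ = ‖Matrix.toEuclideanCLM (𝕜 := ℂ) D‖ := by rw [hnc]; ring
    _ ≤ ε := hD

set_option maxHeartbeats 1000000 in

/-- Theorem 2.3: if `‖Aₚ − Ãₚ‖ ≤ εₚ` for `p = 0,1,2` and
`Ã₀ − 2ζÃ₁ + ζ²Ã₂` is singular, then the spectrum of `A` meets
`[Re ζ − δ̃, Re ζ + δ̃]` with `δ̃ = √(|Im ζ|² + β⁻²(|ζ|²ε₂ + 2|ζ|ε₁ + ε₀))`. -/
theorem stmt4 {H : Type*} [NormedAddCommGroup H] [InnerProductSpace ℂ H] [CompleteSpace H]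
    (A : H →L[ℂ] H) (hA : IsSelfAdjoint A) (n : ℕ)
    (e : Fin n → H) (he : ∀ j, ‖e j‖ = 1) (hli : LinearIndependent ℂ e)
    (β : ℝ) (hβ : 0 < β)
    (hβ' : ∀ c : Fin n → ℂ, β * Real.sqrt (∑ j, ‖c j‖ ^ 2) ≤ ‖∑ j, c j • e j‖)
    (A0 A1 A2 : Matrix (Fin n) (Fin n) ℂ)
    (hA0 : ∀ j k, A0 j k = ⟪A (e k), A (e j)⟫)
    (hA1 : ∀ j k, A1 j k = ⟪e k, A (e j)⟫)
    (hA2 : ∀ j k, A2 j k = ⟪e k, e j⟫)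
    (tA0 tA1 tA2 : Matrix (Fin n) (Fin n) ℂ) (ε0 ε1 ε2 : ℝ)
    (hε0 : 0 ≤ ε0) (hε1 : 0 ≤ ε1) (hε2 : 0 ≤ ε2)
    (h0 : ‖Matrix.toEuclideanCLM (𝕜 := ℂ) (A0 - tA0)‖ ≤ ε0)
    (h1 : ‖Matrix.toEuclideanCLM (𝕜 := ℂ) (A1 - tA1)‖ ≤ ε1)
    (h2 : ‖Matrix.toEuclideanCLM (𝕜 := ℂ) (A2 - tA2)‖ ≤ ε2)
    (ζ : ℂ) (hζ : ¬ IsUnit (tA0 - (2 * ζ) • tA1 + ζ ^ 2 • tA2)) :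
    ∃ x ∈ Set.Icc
        (ζ.re - Real.sqrt (|ζ.im| ^ 2 + (β ^ 2)⁻¹ * (‖ζ‖ ^ 2 * ε2 + 2 * ‖ζ‖ * ε1 + ε0)))
        (ζ.re + Real.sqrt (|ζ.im| ^ 2 + (β ^ 2)⁻¹ * (‖ζ‖ ^ 2 * ε2 + 2 * ‖ζ‖ * ε1 + ε0))),
      (x : ℂ) ∈ spectrum ℂ A := by
  classical
  set E : ℝ := ‖ζ‖ ^ 2 * ε2 + 2 * ‖ζ‖ * ε1 + ε0 with hEdef
  have hE0 : 0 ≤ E := by positivity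
  set δ : ℝ := Real.sqrt (|ζ.im| ^ 2 + (β ^ 2)⁻¹ * E) with hδdef
  have hδ0 : 0 ≤ δ := Real.sqrt_nonneg _
  have hδsq : δ ^ 2 = ζ.im ^ 2 + (β ^ 2)⁻¹ * E := by
    rw [hδdef, Real.sq_sqrt (by positivity), sq_abs]
  -- get a null vector
  set M : Matrix (Fin n) (Fin n) ℂ := tA0 - (2 * ζ) • tA1 + ζ ^ 2 • tA2 with hMdef
  have hdet : M.det = 0 := by
    by_contra hd
    exact hζ ((Matrix.isUnit_iff_isUnit_det M).mpr (isUnit_iff_ne_zero.mpr hd))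
  obtain ⟨v, hv0, hMv⟩ := Matrix.exists_mulVec_eq_zero_iff.mpr hdet
  have hvpos : 0 < ∑ j, ‖v j‖ ^ 2 := by
    obtain ⟨j, hj⟩ := Function.ne_iff.mp hv0
    have hj' : v j ≠ 0 := by simpa using hj
    have hjp : 0 < ‖v j‖ ^ 2 := pow_pos (norm_pos_iff.mpr hj') 2
    calc (0:ℝ) < ‖v j‖ ^ 2 := hjp
      _ ≤ ∑ i, ‖v i‖ ^ 2 :=
        Finset.single_le_sum (f := fun i => ‖v i‖ ^ 2) (fun i _ => by positivity)
          (Finset.mem_univ j)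
  set Nv : ℝ := Real.sqrt (∑ j, ‖v j‖ ^ 2) with hNvdef
  have hNv : 0 < Nv := Real.sqrt_pos.mpr hvpos
  set c : Fin n → ℂ := fun j => (Nv : ℂ)⁻¹ * v j with hcdef
  have hc1 : ∑ j, ‖c j‖ ^ 2 = 1 := by
    have hterm : ∀ j, ‖c j‖ ^ 2 = (Nv ^ 2)⁻¹ * ‖v j‖ ^ 2 := fun j => by
      simp only [hcdef]
      rw [norm_mul, mul_pow, norm_inv, Complex.norm_real, Real.norm_eq_abs,
        abs_of_pos hNv, inv_pow]
    rw [Finset.sum_congr rfl fun j _ => hterm j, ← Finset.mul_sum, hNvdef,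
      Real.sq_sqrt hvpos.le, inv_mul_cancel₀ (ne_of_gt hvpos)]
  have hMc : M.mulVec c = 0 := by
    have : c = (Nv : ℂ)⁻¹ • v := by funext j; simp [hcdef]
    rw [this, Matrix.mulVec_smul, hMv, smul_zero]
  -- the vector u
  set u : H := ∑ j, (starRingEnd ℂ) (c j) • e j with hudef
  have hβu : β ≤ ‖u‖ := by
    have h := hβ' fun j => (starRingEnd ℂ) (c j)
    have hs : ∑ j, ‖(starRingEnd ℂ) (c j)‖ ^ 2 = 1 := by
      simpa using hc1
    rw [hs, Real.sqrt_one, mul_one] at h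
    exact h
  have hu0 : u ≠ 0 := fun h => by
    rw [h, norm_zero] at hβu; exact absurd hβu (not_le.mpr hβ)
  haveI : Nontrivial H := ⟨⟨u, 0, hu0⟩⟩
  -- the quadratic form
  set S : Matrix (Fin n) (Fin n) ℂ → ℂ := fun X => ∑ j, (starRingEnd ℂ) (c j) * (X.mulVec c) j
    with hSdef
  have hSapp : ∀ X, S X = ∑ j, (starRingEnd ℂ) (c j) * (X.mulVec c) j := fun X => rfl
  have Ssub : ∀ X Y, S (X - Y) = S X - S Y := by
    intro X Y
    simp only [hSapp, Matrix.sub_mulVec, Pi.sub_apply, mul_sub, Finset.sum_sub_distrib]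
  have Sadd : ∀ X Y, S (X + Y) = S X + S Y := by
    intro X Y
    simp only [hSapp, Matrix.add_mulVec, Pi.add_apply, mul_add, Finset.sum_add_distrib]
  have Ssmul : ∀ (a : ℂ) X, S (a • X) = a * S X := by
    intro a X
    simp only [hSapp, Matrix.smul_mulVec, Pi.smul_apply, smul_eq_mul, Finset.mul_sum]
    exact Finset.sum_congr rfl fun j _ => by ring
  have hSM : S tA0 - (2 * ζ) * S tA1 + ζ ^ 2 * S tA2 = 0 := by
    have h : S M = 0 := by rw [hSapp, hMc]; simp
    rw [hMdef] at h
    rwa [Sadd, Ssub, Ssmul, Ssmul] at h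
  have e0 : S A0 = ⟪A u, A u⟫ := by
    rw [hSapp]
    rw [key1 A0 (fun k => A (e k)) (fun j => A (e j)) hA0 c]
    congr 1 <;> (rw [hudef, map_sum]; exact Finset.sum_congr rfl fun j _ => (A.map_smul _ _).symm)
  have e1 : S A1 = ⟪u, A u⟫ := by
    rw [hSapp, key1 A1 e (fun j => A (e j)) hA1 c]
    congr 1
    rw [hudef, map_sum]
    exact Finset.sum_congr rfl fun j _ => (A.map_smul _ _).symm
  have e2 : S A2 = ⟪u, u⟫ := by
    rw [hSapp, key1 A2 e e hA2 c]
  set q : ℂ := ⟪A u, A u⟫ - (2 * ζ) * ⟪u, A u⟫ + ζ ^ 2 * ⟪u, u⟫ with hqdef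
  have hq2 : q = S (A0 - tA0) - (2 * ζ) * S (A1 - tA1) + ζ ^ 2 * S (A2 - tA2) := by
    rw [Ssub, Ssub, Ssub, hqdef, ← e0, ← e1, ← e2]
    linear_combination hSM
  have hqb : ‖q‖ ≤ E := by
    rw [hq2]
    have b0 := key2 (A0 - tA0) ε0 h0 c hc1
    have b1 := key2 (A1 - tA1) ε1 h1 c hc1
    have b2 := key2 (A2 - tA2) ε2 h2 c hc1
    calc ‖S (A0 - tA0) - (2 * ζ) * S (A1 - tA1) + ζ ^ 2 * S (A2 - tA2)‖
        ≤ ‖S (A0 - tA0) - (2 * ζ) * S (A1 - tA1)‖ + ‖ζ ^ 2 * S (A2 - tA2)‖ := norm_add_le _ _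
      _ ≤ ‖S (A0 - tA0)‖ + ‖(2 * ζ) * S (A1 - tA1)‖ + ‖ζ ^ 2 * S (A2 - tA2)‖ := by
          have := norm_sub_le (S (A0 - tA0)) ((2 * ζ) * S (A1 - tA1))
          linarith
      _ = ‖S (A0 - tA0)‖ + 2 * ‖ζ‖ * ‖S (A1 - tA1)‖ + ‖ζ‖ ^ 2 * ‖S (A2 - tA2)‖ := by
          simp [norm_mul, norm_pow]
          try ring
      _ ≤ ε0 + 2 * ‖ζ‖ * ε1 + ‖ζ‖ ^ 2 * ε2 := by
          have hζ0 : (0:ℝ) ≤ ‖ζ‖ := norm_nonneg _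
          nlinarith
      _ = E := by rw [hEdef]; ring
  -- real part identity
  set x : ℝ := ζ.re with hxdef
  set b : ℂ := ⟪u, A u⟫ with hbdef
  have hbreal : (starRingEnd ℂ) b = b := by
    rw [hbdef, inner_conj_symm]
    exact hA.isSymmetric u u
  have hbim : b.im = 0 := by
    have h := congrArg Complex.im hbreal
    simp only [Complex.conj_im] at h
    linarith
  have hAuu : ⟪A u, A u⟫ = ((‖A u‖ : ℂ)) ^ 2 := inner_self_eq_norm_sq_to_K (A u)
  have huu : ⟪u, u⟫ = ((‖u‖ : ℂ)) ^ 2 := inner_self_eq_norm_sq_to_K u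
  have hnormsq : ‖A u - (x : ℂ) • u‖ ^ 2 = q.re + ζ.im ^ 2 * ‖u‖ ^ 2 := by
    have hns := @norm_sub_sq ℂ _ _ _ _ (A u) ((x : ℂ) • u)
    have hre : RCLike.re ⟪A u, (x : ℂ) • u⟫ = x * b.re := by
      rw [inner_smul_right]
      have : ⟪A u, u⟫ = (starRingEnd ℂ) b := by rw [hbdef, inner_conj_symm]
      rw [this, hbreal]
      simp [Complex.mul_re, Complex.ofReal_re, Complex.ofReal_im]
    have hnx : ‖(x : ℂ) • u‖ ^ 2 = x ^ 2 * ‖u‖ ^ 2 := by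
      rw [norm_smul, mul_pow, Complex.norm_real, Real.norm_eq_abs, sq_abs]
    have hqre : q.re = ‖A u‖ ^ 2 - 2 * x * b.re + (x ^ 2 - ζ.im ^ 2) * ‖u‖ ^ 2 := by
      rw [hqdef, hAuu, huu]
      simp [Complex.add_re, Complex.sub_re, Complex.mul_re, Complex.mul_im, Complex.ofReal_re,
        Complex.ofReal_im, hbim, hxdef, pow_two]
      try ring
    rw [hns, hre, hnx, hqre]
    ring
  -- spectral argument
  have hne : (spectrum ℂ A).Nonempty := spectrum.nonempty A
  have hcpt : IsCompact (spectrum ℂ A) := spectrum.isCompact A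
  obtain ⟨μ, hμmem, hmin⟩ := hcpt.exists_isMinOn hne
    ((continuous_id.sub continuous_const).norm.continuousOn :
      ContinuousOn (fun z : ℂ => ‖z - (x : ℂ)‖) (spectrum ℂ A))
  have hμre : μ = (μ.re : ℂ) := hA.mem_spectrum_eq_re hμmem
  have hdist : ‖μ - (x : ℂ)‖ ≤ δ := by
    by_contra hcon
    push_neg at hcon
    set d : ℝ := ‖μ - (x : ℂ)‖ with hddef
    have hdpos : 0 < d := lt_of_le_of_lt hδ0 hcon
    set T : H →L[ℂ] H := A - algebraMap ℂ (H →L[ℂ] H) (x : ℂ) with hTdef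
    have hTsa : IsSelfAdjoint T := by
      refine hA.sub ?_
      rw [IsSelfAdjoint, Algebra.algebraMap_eq_smul_one, star_smul, star_one,
        Complex.star_def, Complex.conj_ofReal]
    have hspecT : ∀ μ' ∈ spectrum ℂ T, d ≤ ‖μ'‖ := by
      intro μ' hμ'
      rw [hTdef, ← spectrum.sub_singleton_eq] at hμ'
      obtain ⟨μ₁, hμ₁, r, hr, hrr⟩ := hμ'
      rw [Set.mem_singleton_iff] at hr
      subst hr
      rw [← hrr]
      exact hmin hμ₁
    have hTu : T u = A u - (x : ℂ) • u := by
      rw [hTdef]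
      simp [Algebra.algebraMap_eq_smul_one, ContinuousLinearMap.sub_apply]
    have hkey := key0 T hTsa d hdpos hspecT u
    rw [hTu] at hkey
    have hsq : d ^ 2 * ‖u‖ ^ 2 ≤ ‖A u - (x : ℂ) • u‖ ^ 2 := by
      have h' : (d * ‖u‖) ^ 2 ≤ ‖A u - (x : ℂ) • u‖ ^ 2 := by
        apply sq_le_sq' _ hkey
        nlinarith [norm_nonneg u, norm_nonneg (A u - (x : ℂ) • u)]
      nlinarith [h']
    have hqre_le : q.re ≤ E := (Complex.re_le_norm q).trans hqb
    have hub : ‖A u - (x : ℂ) • u‖ ^ 2 ≤ E + ζ.im ^ 2 * ‖u‖ ^ 2 := by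
      rw [hnormsq]; linarith
    have hδd : δ ^ 2 < d ^ 2 := by nlinarith
    have hm : β ^ 2 ≤ ‖u‖ ^ 2 := by nlinarith
    have hfin : (β ^ 2)⁻¹ * E * ‖u‖ ^ 2 ≥ E := by
      have h1 : (β ^ 2)⁻¹ * E * β ^ 2 ≤ (β ^ 2)⁻¹ * E * ‖u‖ ^ 2 := by
        apply mul_le_mul_of_nonneg_left hm
        positivity
      have h2 : (β ^ 2)⁻¹ * E * β ^ 2 = E := by field_simp
      linarith
    have hmpos : 0 < ‖u‖ ^ 2 := lt_of_lt_of_le (by positivity) hm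
    have hstep : δ ^ 2 * ‖u‖ ^ 2 < d ^ 2 * ‖u‖ ^ 2 :=
      mul_lt_mul_of_pos_right hδd hmpos
    have hexp : δ ^ 2 * ‖u‖ ^ 2
        = ζ.im ^ 2 * ‖u‖ ^ 2 + (β ^ 2)⁻¹ * E * ‖u‖ ^ 2 := by rw [hδsq]; ring
    linarith
  refine ⟨μ.re, ?_, by rwa [← hμre]⟩
  have : ‖μ - (x : ℂ)‖ = |μ.re - x| := by
    rw [hμre]
    rw [show ((μ.re : ℂ) - (x : ℂ)) = ((μ.re - x : ℝ) : ℂ) by push_cast; ring]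
    exact Complex.norm_real _
  rw [this] at hdist
  rw [Set.mem_Icc]
  constructor <;> [linarith [abs_le.mp hdist]; linarith [abs_le.mp hdist]]
end

section
/- (Universal non-pollution property) Let A be a bounded self-adjoint operator on a complex Hilbert space H and L ⊂ H a nonzero finite-dimensional subspace. Suppose ζ ∈ ℂ is a solution of problem (Q), i.e. there exists a nonzero u ∈ L with ⟨Au, Av⟩ − 2ζ⟨Au, v⟩ + ζ²⟨u, v⟩ = 0 for all v ∈ L. Then dist(Re ζ, Spec(A)) ≤ |Im ζ|. -/
open scoped ComplexInnerProductSpace ENNReal NNReal Pointwise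

theorem key_eq {H : Type*} [NormedAddCommGroup H] [InnerProductSpace ℂ H] [CompleteSpace H]
    (A : H →L[ℂ] H) (hA : IsSelfAdjoint A)
    (ζ : ℂ) (u : H)
    (hQu : ⟪A u, A u⟫ - 2 * ζ * ⟪u, A u⟫ + ζ ^ 2 * ⟪u, u⟫ = 0) :
    ‖A u - (ζ.re : ℂ) • u‖ = |ζ.im| * ‖u‖ := by
  have hsym : (⟪A u, u⟫ : ℂ) = ⟪u, A u⟫ := hA.isSymmetric u u
  have hc : (⟪u, A u⟫ : ℂ).im = 0 := by
    have h3 : (⟪A u, u⟫ : ℂ) = starRingEnd ℂ ⟪u, A u⟫ := by rw [inner_conj_symm]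
    have h5 : (⟪u, A u⟫ : ℂ).im = -(⟪u, A u⟫ : ℂ).im := by
      have h6 := congrArg Complex.im (hsym.symm.trans h3)
      rwa [Complex.conj_im] at h6
    linarith
  have e := congrArg Complex.re hQu
  have hAA : (⟪A u, A u⟫ : ℂ) = ((‖A u‖ : ℝ) : ℂ) ^ 2 := inner_self_eq_norm_sq_to_K (A u)
  have huu : (⟪u, u⟫ : ℂ) = ((‖u‖ : ℝ) : ℂ) ^ 2 := inner_self_eq_norm_sq_to_K u
  rw [hAA, huu] at e
  set c := (⟪u, A u⟫ : ℂ) with hcdef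
  have ere : ‖A u‖ ^ 2 - 2 * (ζ.re * c.re) + (ζ.re ^ 2 - ζ.im ^ 2) * ‖u‖ ^ 2 = 0 := by
    simp only [Complex.add_re, Complex.sub_re, Complex.mul_re, Complex.zero_re, Complex.ofReal_re,
      Complex.ofReal_im, pow_two, Complex.mul_im] at e
    simp only [hc] at e
    norm_num at e
    ring_nf at e ⊢
    linarith
  have hns : ‖A u - (ζ.re : ℂ) • u‖ ^ 2
      = ‖A u‖ ^ 2 - 2 * RCLike.re (⟪A u, (ζ.re : ℂ) • u⟫ : ℂ) + ‖(ζ.re : ℂ) • u‖ ^ 2 :=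
    norm_sub_sq _ _
  have h1 : RCLike.re (⟪A u, (ζ.re : ℂ) • u⟫ : ℂ) = ζ.re * c.re := by
    rw [inner_smul_right]
    have h4 : (⟪A u, u⟫ : ℂ) = c := hsym
    rw [h4]
    simp [Complex.mul_re, Complex.ofReal_re, Complex.ofReal_im]
  have h2 : ‖(ζ.re : ℂ) • u‖ ^ 2 = ζ.re ^ 2 * ‖u‖ ^ 2 := by
    rw [norm_smul, mul_pow, Complex.norm_real, Real.norm_eq_abs, sq_abs]
  have hsq : ‖A u - (ζ.re : ℂ) • u‖ ^ 2 = (|ζ.im| * ‖u‖) ^ 2 := by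
    rw [hns, h1, h2, mul_pow, sq_abs]; linarith
  have := congrArg Real.sqrt hsq
  rwa [Real.sqrt_sq (norm_nonneg _), Real.sqrt_sq (by positivity)] at this

theorem key_dist {H : Type*} [NormedAddCommGroup H] [InnerProductSpace ℂ H] [CompleteSpace H]
    (A : H →L[ℂ] H) (hA : IsSelfAdjoint A) (a b : ℝ) (hb : 0 ≤ b)
    (u : H) (hu0 : u ≠ 0) (h : ‖A u - (a : ℂ) • u‖ = b * ‖u‖) :
    Metric.infDist ((a : ℂ)) (spectrum ℂ A) ≤ b := by
  by_contra hcon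
  push_neg at hcon
  set d := Metric.infDist ((a : ℂ)) (spectrum ℂ A) with hd
  have hd0 : 0 < d := lt_of_le_of_lt hb hcon
  have hun : 0 < ‖u‖ := norm_pos_iff.mpr hu0
  set B : H →L[ℂ] H := A - algebraMap ℂ (H →L[ℂ] H) ((a : ℂ)) with hBdef
  have hBu : B u = A u - (a : ℂ) • u := by
    simp [hBdef, ContinuousLinearMap.sub_apply, Algebra.algebraMap_eq_smul_one]
  have hBsa : IsSelfAdjoint B := by
    refine hA.sub ?_
    show star _ = _
    rw [← algebraMap_star_comm]
    norm_num
  have hspecB : ∀ l ∈ spectrum ℂ B, d ≤ ‖l‖ := by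
    intro l hl
    have : l ∈ spectrum ℂ A - ({(a : ℂ)} : Set ℂ) := by
      rw [spectrum.sub_singleton_eq]; exact hl
    obtain ⟨x, hx, y, hy, hxy⟩ := this
    rw [Set.mem_singleton_iff] at hy
    subst hy
    have h1 : d ≤ dist ((a : ℂ)) x := Metric.infDist_le_dist_of_mem hx
    rw [dist_eq_norm, norm_sub_rev] at h1
    rw [← hxy]
    exact h1
  have h0 : IsUnit B := by
    rw [← spectrum.zero_notMem_iff ℂ]
    intro h0m
    have := hspecB 0 h0m
    simp at this
    linarith
  set C : H →L[ℂ] H := ↑h0.unit⁻¹ with hCdef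
  have hBC : B * C = 1 := h0.unit_spec ▸ h0.unit.mul_inv
  have hCB : C * B = 1 := h0.unit_spec ▸ h0.unit.inv_mul
  have hCsa : IsSelfAdjoint C := by
    have h1 : star C * B = 1 := by
      have : star C * star B = star (B * C) := (star_mul B C).symm ▸ rfl
      calc star C * B = star C * star B := by rw [hBsa.star_eq]
        _ = star (B * C) := by rw [← star_mul]
        _ = 1 := by rw [hBC, star_one]
    calc star C = star C * (B * C) := by rw [hBC, mul_one]
      _ = (star C * B) * C := by rw [mul_assoc]
      _ = C := by rw [h1, one_mul]
  have hCnorm : ‖C‖ ≤ 1 / d := by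
    have hspecC : ∀ k ∈ spectrum ℂ C, ‖k‖ ≤ 1 / d := by
      intro k hk
      have hmap := spectrum.map_inv (𝕜 := ℂ) h0.unit
      rw [h0.unit_spec] at hmap
      have hk' : k⁻¹ ∈ spectrum ℂ B := by
        rw [← hmap] at hk
        exact Set.mem_inv.mp hk
      have hdk := hspecB _ hk'
      rcases eq_or_ne k 0 with rfl | hk0
      · simp at hdk; linarith
      · rw [norm_inv] at hdk
        rw [le_inv_comm₀ hd0 (norm_pos_iff.mpr hk0)] at hdk
        simpa [one_div] using hdk
    have hr := hCsa.spectralRadius_eq_nnnorm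
    have hle : (‖C‖₊ : ℝ≥0∞) ≤ ENNReal.ofReal (1 / d) := by
      rw [← hr]
      simp only [spectralRadius]
      refine iSup₂_le fun k hk => ?_
      rw [← ENNReal.ofReal_coe_nnreal, coe_nnnorm]
      exact ENNReal.ofReal_le_ofReal (hspecC k hk)
    rw [← ENNReal.ofReal_coe_nnreal, coe_nnnorm] at hle
    exact (ENNReal.ofReal_le_ofReal_iff (by positivity)).mp hle
  have hCBu : C (B u) = u := by
    have := congrArg (fun T : H →L[ℂ] H => T u) hCB
    simpa [ContinuousLinearMap.mul_apply] using this
  have : ‖u‖ ≤ (1 / d) * (b * ‖u‖) := by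
    calc ‖u‖ = ‖C (B u)‖ := by rw [hCBu]
      _ ≤ ‖C‖ * ‖B u‖ := C.le_opNorm _
      _ ≤ (1 / d) * (b * ‖u‖) := by
          rw [hBu, h]
          exact mul_le_mul_of_nonneg_right hCnorm (by positivity)
  have hlt : (1 / d) * (b * ‖u‖) < ‖u‖ := by
    rw [div_mul_eq_mul_div, one_mul, div_lt_iff₀ hd0]
    nlinarith
  linarith

/-- Universal non-pollution property: if `ζ` solves problem (Q), i.e. there is a nonzero
`u ∈ L` with `⟨Au, Av⟩ − 2ζ⟨Au, v⟩ + ζ²⟨u, v⟩ = 0` for all `v ∈ L`, then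
`dist(Re ζ, Spec(A)) ≤ |Im ζ|`. -/
theorem stmt6 {H : Type*} [NormedAddCommGroup H] [InnerProductSpace ℂ H] [CompleteSpace H]
    (A : H →L[ℂ] H) (hA : IsSelfAdjoint A)
    (L : Submodule ℂ H) [FiniteDimensional ℂ L] (hL : L ≠ ⊥)
    (ζ : ℂ) (u : H) (huL : u ∈ L) (hu0 : u ≠ 0)
    (hQ : ∀ v ∈ L, ⟪A v, A u⟫ - 2 * ζ * ⟪v, A u⟫ + ζ ^ 2 * ⟪v, u⟫ = 0) :
    Metric.infDist ((ζ.re : ℂ)) (spectrum ℂ A) ≤ |ζ.im| :=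
  key_dist A hA ζ.re |ζ.im| (abs_nonneg _) u hu0 (key_eq A hA ζ u (hQ u huL))
end

section
/- (Lemma 3.3, pseudospectrum characterization) Let A₀, A₁, A₂ be n×n complex matrices, M(z) := A₀ − 2zA₁ + z²A₂, and G(z) := min over nonzero v ∈ ℂⁿ of ‖M(z)v‖/‖v‖. Fix ζ ∈ ℂ and ε₀, ε₁, ε₂ ≥ 0. Then G(ζ) ≤ ε₀ + 2ε₁|ζ| + ε₂|ζ|² if and only if there exist n×n complex matrices Ã₀, Ã₁, Ã₂ with ‖Ãₚ − Aₚ‖ ≤ εₚ for p = 0,1,2 such that Ã₀ − 2ζÃ₁ + ζ²Ã₂ is singular (has determinant zero). -/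
lemma det_zero_iff_clm (n : ℕ) (A : Matrix (Fin n) (Fin n) ℂ) :
    A.det = 0 ↔ ∃ v : EuclideanSpace ℂ (Fin n), v ≠ 0 ∧
      Matrix.toEuclideanCLM (𝕜 := ℂ) A v = 0 := by
  rw [← Matrix.exists_mulVec_eq_zero_iff]
  constructor
  · rintro ⟨v, hv, hAv⟩
    refine ⟨(WithLp.equiv 2 _).symm v, ?_, ?_⟩
    · simpa using hv
    · apply (WithLp.equiv 2 _).injective
      simpa [Matrix.toLin'_apply] using hAv
  · rintro ⟨v, hv, hAv⟩
    refine ⟨WithLp.equiv 2 _ v, by simpa using hv, ?_⟩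
    have := congrArg (WithLp.equiv 2 _) hAv
    simpa [Matrix.toLin'_apply] using this

lemma exists_min_clm (n : ℕ) (hn : 0 < n)
    (T : EuclideanSpace ℂ (Fin n) →L[ℂ] EuclideanSpace ℂ (Fin n)) :
    ∃ v : EuclideanSpace ℂ (Fin n), ‖v‖ = 1 ∧
      sInf {r : ℝ | ∃ w : EuclideanSpace ℂ (Fin n), w ≠ 0 ∧ r = ‖T w‖ / ‖w‖} = ‖T v‖ := by
  have hsph : (Metric.sphere (0 : EuclideanSpace ℂ (Fin n)) 1).Nonempty := by
    refine ⟨EuclideanSpace.single ⟨0, hn⟩ (1 : ℂ), ?_⟩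
    simp [EuclideanSpace.norm_single]
  obtain ⟨v, hvmem, hmin⟩ := (isCompact_sphere (0 : EuclideanSpace ℂ (Fin n)) 1).exists_isMinOn
    hsph (Continuous.continuousOn (by continuity : Continuous fun w => ‖T w‖))
  have hv1 : ‖v‖ = 1 := by simpa using hvmem
  have hvne : v ≠ 0 := by intro h; rw [h] at hv1; simp at hv1
  refine ⟨v, hv1, le_antisymm ?_ ?_⟩
  · exact csInf_le ⟨0, fun r ⟨w, hw, hr⟩ => hr ▸ div_nonneg (norm_nonneg _) (norm_nonneg _)⟩
      ⟨v, hvne, by rw [hv1, div_one]⟩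
  · refine le_csInf ⟨‖T v‖, v, hvne, by rw [hv1, div_one]⟩ ?_
    rintro r ⟨w, hw, rfl⟩
    have hwn : (0:ℝ) < ‖w‖ := norm_pos_iff.mpr hw
    set u : EuclideanSpace ℂ (Fin n) := ((‖w‖⁻¹ : ℝ) : ℂ) • w with hu
    have hun : ‖u‖ = 1 := by
      rw [hu, norm_smul]
      simp [hwn.ne', abs_of_nonneg (inv_nonneg.mpr hwn.le)]
    have humem : u ∈ Metric.sphere (0 : EuclideanSpace ℂ (Fin n)) 1 := by simp [hun]
    have := hmin humem
    have hTu : ‖T u‖ = ‖T w‖ / ‖w‖ := by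
      rw [hu, map_smul, norm_smul]
      simp [div_eq_inv_mul]
    rw [← hTu]
    simpa using this

set_option maxHeartbeats 1000000 in
set_option synthInstance.maxHeartbeats 1000000 in
/-- Lemma 3.3 (pseudospectrum characterization): with `M(z) = A₀ − 2zA₁ + z²A₂` and
`G(z) = min_{0≠v∈ℂⁿ} ‖M(z)v‖/‖v‖`, one has `G(ζ) ≤ ε₀ + 2ε₁|ζ| + ε₂|ζ|²` iff some
perturbed matrix polynomial `Ã₀ − 2ζÃ₁ + ζ²Ã₂` with `‖Ãₚ − Aₚ‖ ≤ εₚ` is singular. -/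
theorem stmt10 (n : ℕ) (hn : 0 < n) (A0 A1 A2 : Matrix (Fin n) (Fin n) ℂ) (ζ : ℂ)
    (ε0 ε1 ε2 : ℝ) (hε0 : 0 ≤ ε0) (hε1 : 0 ≤ ε1) (hε2 : 0 ≤ ε2) :
    sInf {r : ℝ | ∃ v : EuclideanSpace ℂ (Fin n), v ≠ 0 ∧
        r = ‖Matrix.toEuclideanCLM (𝕜 := ℂ) (A0 - (2 * ζ) • A1 + ζ ^ 2 • A2) v‖ / ‖v‖}
      ≤ ε0 + 2 * ε1 * ‖ζ‖ + ε2 * ‖ζ‖ ^ 2 ↔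
    ∃ tA0 tA1 tA2 : Matrix (Fin n) (Fin n) ℂ,
      ‖Matrix.toEuclideanCLM (𝕜 := ℂ) (tA0 - A0)‖ ≤ ε0 ∧
      ‖Matrix.toEuclideanCLM (𝕜 := ℂ) (tA1 - A1)‖ ≤ ε1 ∧
      ‖Matrix.toEuclideanCLM (𝕜 := ℂ) (tA2 - A2)‖ ≤ ε2 ∧
      (tA0 - (2 * ζ) • tA1 + ζ ^ 2 • tA2).det = 0 := by
  set M : Matrix (Fin n) (Fin n) ℂ := A0 - (2 * ζ) • A1 + ζ ^ 2 • A2 with hM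
  set T := Matrix.toEuclideanCLM (𝕜 := ℂ) M with hT
  set s : ℝ := ε0 + 2 * ε1 * ‖ζ‖ + ε2 * ‖ζ‖ ^ 2 with hs
  constructor
  · intro h
    obtain ⟨v, hv1, hG⟩ := exists_min_clm n hn T
    have hvne : v ≠ 0 := by intro h0; rw [h0] at hv1; simp at hv1
    have hGs : ‖T v‖ ≤ s := hG ▸ h
    by_cases hG0 : T v = 0
    · exact ⟨A0, A1, A2, by rw [sub_self, map_zero, norm_zero]; exact hε0,
        by rw [sub_self, map_zero, norm_zero]; exact hε1,
        by rw [sub_self, map_zero, norm_zero]; exact hε2,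
        (det_zero_iff_clm n M).mpr ⟨v, hvne, hG0⟩⟩
    · have hGpos : (0:ℝ) < ‖T v‖ := norm_pos_iff.mpr hG0
      have hspos : (0:ℝ) < s := lt_of_lt_of_le hGpos hGs
      set w : ℂ := if ζ = 0 then 1 else ζ / ‖ζ‖ with hw
      have hwnorm : ‖w‖ = 1 := by
        by_cases h0 : ζ = 0
        · simp [hw, h0]
        · have : (0:ℝ) < ‖ζ‖ := norm_pos_iff.mpr h0
          simp [hw, h0, norm_div, this.ne']
      have hζw : ζ = (‖ζ‖ : ℂ) * w := by
        by_cases h0 : ζ = 0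
        · simp [hw, h0]
        · have hz : (‖ζ‖ : ℂ) ≠ 0 := by
            simpa using (norm_pos_iff.mpr h0).ne'
          rw [hw, if_neg h0]; field_simp
      have hwc : w * (starRingEnd ℂ) w = 1 := by
        rw [Complex.mul_conj]
        norm_cast
        rw [Complex.normSq_eq_norm_sq, hwnorm]
        norm_num
      set c0 : ℂ := ((ε0 / s : ℝ) : ℂ) with hc0
      set c1 : ℂ := -((ε1 / s : ℝ) : ℂ) * (starRingEnd ℂ) w with hc1
      set c2 : ℂ := ((ε2 / s : ℝ) : ℂ) * ((starRingEnd ℂ) w) ^ 2 with hc2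
      have hsC : ((ε0 : ℂ) + 2 * ε1 * ‖ζ‖ + ε2 * ‖ζ‖ ^ 2) = (s : ℂ) := by
        rw [hs]; push_cast; ring
      have key : c0 - 2 * ζ * c1 + ζ ^ 2 * c2 = 1 := by
        have hsne : (s : ℂ) ≠ 0 := by exact_mod_cast hspos.ne'
        rw [hc0, hc1, hc2, hζw]
        push_cast
        field_simp
        linear_combination ((2:ℂ) * (‖ζ‖:ℂ) * (ε1:ℂ) +
          (‖ζ‖:ℂ) ^ 2 * (ε2:ℂ) * (w * (starRingEnd ℂ) w + 1)) * hwc + hsC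
      set Δ : EuclideanSpace ℂ (Fin n) →L[ℂ] EuclideanSpace ℂ (Fin n) :=
        -(ContinuousLinearMap.smulRight (innerSL ℂ v) (T v)) with hΔ
      have hΔnorm : ‖Δ‖ = ‖T v‖ := by
        rw [hΔ, norm_neg, ContinuousLinearMap.norm_smulRight_apply, innerSL_apply_norm, hv1,
          one_mul]
      have hΔv : Δ v = -(T v) := by
        simp [hΔ, ContinuousLinearMap.smulRight_apply, inner_self_eq_norm_sq_to_K, hv1]
      set D : Matrix (Fin n) (Fin n) ℂ := (Matrix.toEuclideanCLM (𝕜 := ℂ)).symm Δ with hD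
      have hDΔ : Matrix.toEuclideanCLM (𝕜 := ℂ) D = Δ := by
        rw [hD]; exact StarAlgEquiv.apply_symm_apply _ _
      have hnorm : ∀ (A : Matrix (Fin n) (Fin n) ℂ) (c : ℂ) (ε : ℝ), 0 ≤ ε → ‖c‖ = ε / s →
          ‖Matrix.toEuclideanCLM (𝕜 := ℂ) ((A + c • D) - A)‖ ≤ ε := by
        intro A c ε hε hcε
        rw [add_sub_cancel_left, map_smul, hDΔ]
        calc ‖c • Δ‖ = ‖c‖ * ‖Δ‖ := norm_smul c Δ
          _ = ε / s * ‖T v‖ := by rw [hcε, hΔnorm]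
          _ ≤ ε / s * s := mul_le_mul_of_nonneg_left hGs (div_nonneg hε hspos.le)
          _ = ε := div_mul_cancel₀ ε hspos.ne'
      refine ⟨A0 + c0 • D, A1 + c1 • D, A2 + c2 • D,
        hnorm A0 c0 ε0 hε0 (by
          rw [hc0, Complex.norm_real, Real.norm_of_nonneg (div_nonneg hε0 hspos.le)]),
        hnorm A1 c1 ε1 hε1 (by
          rw [hc1, norm_mul, norm_neg, Complex.norm_real, RCLike.norm_conj, hwnorm, mul_one,
            Real.norm_of_nonneg (div_nonneg hε1 hspos.le)]),
        hnorm A2 c2 ε2 hε2 (by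
          rw [hc2, norm_mul, norm_pow, Complex.norm_real, RCLike.norm_conj, hwnorm, one_pow,
            mul_one, Real.norm_of_nonneg (div_nonneg hε2 hspos.le)]), ?_⟩
      have hcomb : (A0 + c0 • D) - (2 * ζ) • (A1 + c1 • D) + ζ ^ 2 • (A2 + c2 • D)
          = M + (c0 - 2 * ζ * c1 + ζ ^ 2 * c2) • D := by
        rw [hM]; module
      rw [hcomb, key, one_smul]
      refine (det_zero_iff_clm n _).mpr ⟨v, hvne, ?_⟩
      rw [map_add, hDΔ, ContinuousLinearMap.add_apply, ← hT, hΔv, add_neg_cancel]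
  · rintro ⟨tA0, tA1, tA2, h0, h1, h2, hdet⟩
    obtain ⟨v, hvne, hv0⟩ := (det_zero_iff_clm n _).mp hdet
    have hvn : (0:ℝ) < ‖v‖ := norm_pos_iff.mpr hvne
    refine csInf_le_of_le
      ⟨0, fun r ⟨u, hu, hr⟩ => hr ▸ div_nonneg (norm_nonneg _) (norm_nonneg _)⟩
      ⟨v, hvne, rfl⟩ ?_
    rw [div_le_iff₀ hvn]
    have hMd : M - (tA0 - (2 * ζ) • tA1 + ζ ^ 2 • tA2)
        = (A0 - tA0) - (2 * ζ) • (A1 - tA1) + ζ ^ 2 • (A2 - tA2) := by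
      rw [hM]; module
    have hTv : T v = Matrix.toEuclideanCLM (𝕜 := ℂ)
        ((A0 - tA0) - (2 * ζ) • (A1 - tA1) + ζ ^ 2 • (A2 - tA2)) v := by
      rw [← hMd, map_sub, ContinuousLinearMap.sub_apply, hv0, sub_zero, hT]
    set E0 := Matrix.toEuclideanCLM (𝕜 := ℂ) (A0 - tA0) with hE0
    set E1 := Matrix.toEuclideanCLM (𝕜 := ℂ) (A1 - tA1) with hE1
    set E2 := Matrix.toEuclideanCLM (𝕜 := ℂ) (A2 - tA2) with hE2
    have hE0n : ‖E0‖ ≤ ε0 := by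
      rw [hE0, ← neg_sub tA0 A0, map_neg, norm_neg]; exact h0
    have hE1n : ‖E1‖ ≤ ε1 := by
      rw [hE1, ← neg_sub tA1 A1, map_neg, norm_neg]; exact h1
    have hE2n : ‖E2‖ ≤ ε2 := by
      rw [hE2, ← neg_sub tA2 A2, map_neg, norm_neg]; exact h2
    have hTv2 : T v = E0 v - (2 * ζ) • E1 v + ζ ^ 2 • E2 v := by
      rw [hTv, map_add, map_sub, map_smul, map_smul]
      simp [hE0, hE1, hE2, map_sub, ContinuousLinearMap.add_apply,
        ContinuousLinearMap.sub_apply, ContinuousLinearMap.smul_apply]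
    rw [hTv2]
    calc ‖E0 v - (2 * ζ) • E1 v + ζ ^ 2 • E2 v‖
        ≤ ‖E0 v - (2 * ζ) • E1 v‖ + ‖ζ ^ 2 • E2 v‖ := norm_add_le _ _
      _ ≤ ‖E0 v‖ + ‖(2 * ζ) • E1 v‖ + ‖ζ ^ 2 • E2 v‖ := by
          gcongr; exact norm_sub_le _ _
      _ ≤ ε0 * ‖v‖ + 2 * ‖ζ‖ * (ε1 * ‖v‖) + ‖ζ‖ ^ 2 * (ε2 * ‖v‖) := by
          gcongr ?_ + ?_ + ?_
          · exact le_trans (E0.le_opNorm v) (by gcongr)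
          · rw [norm_smul, show ‖(2 * ζ : ℂ)‖ = 2 * ‖ζ‖ by rw [norm_mul]; norm_num]
            have := le_trans (E1.le_opNorm v) (by gcongr : ‖E1‖ * ‖v‖ ≤ ε1 * ‖v‖)
            calc 2 * ‖ζ‖ * ‖E1 v‖ ≤ 2 * ‖ζ‖ * (ε1 * ‖v‖) := by
                  apply mul_le_mul_of_nonneg_left this
                  positivity
              _ = 2 * ‖ζ‖ * (ε1 * ‖v‖) := rfl
          · rw [norm_smul, norm_pow]
            have := le_trans (E2.le_opNorm v) (by gcongr : ‖E2‖ * ‖v‖ ≤ ε2 * ‖v‖)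
            apply mul_le_mul_of_nonneg_left this
            positivity
      _ = s * ‖v‖ := by rw [hs]; ring
end

section
/- (Lemma 3.5) Let A be a bounded self-adjoint operator on a complex Hilbert space H and let λ be an eigenvalue of A. Suppose the sequence of finite-dimensional subspaces Lₙ (with orthonormal bases e₁,…,eₙ and orthogonal projections Πₙ) satisfies condition (H) at λ. Then Gₙ(λ) → 0 as n → ∞. -/
open scoped ComplexInnerProductSpace

lemma onb_norm_sum {ι : Type*} [Fintype ι] {E : Type*} [NormedAddCommGroup E]
    [InnerProductSpace ℂ E] {v : ι → E} (hv : Orthonormal ℂ v) (l : ι → ℂ) :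
    ‖∑ i, l i • v i‖ = Real.sqrt (∑ i, ‖l i‖ ^ 2) := by
  rw [norm_eq_sqrt_re_inner (𝕜 := ℂ)]
  congr 1
  rw [hv.inner_sum l l Finset.univ]
  simp [RCLike.conj_mul, ← Complex.ofReal_pow]

/-- Lemma 3.5: if `λ` is an eigenvalue of the bounded self-adjoint operator `A` and the
subspaces `Lₙ` (spanned by the orthonormal vectors `e n 1, …, e n n`) satisfy condition
(H) at `λ`, then `Gₙ(λ) → 0` as `n → ∞`. -/
theorem stmt12 {H : Type*} [NormedAddCommGroup H] [InnerProductSpace ℂ H] [CompleteSpace H]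
    (A : H →L[ℂ] H) (hA : IsSelfAdjoint A)
    (e : ∀ n : ℕ, Fin n → H) (he : ∀ n, Orthonormal ℂ (e n))
    (lam : ℝ) (hlam : ∃ u : H, u ≠ 0 ∧ A u = (lam : ℂ) • u)
    (G : ℕ → ℂ → ℝ)
    (hG : ∀ n z, G n z = sInf {r : ℝ | ∃ v : EuclideanSpace ℂ (Fin n), v ≠ 0 ∧
        r = ‖Matrix.toEuclideanCLM (𝕜 := ℂ)
            (Matrix.of fun j k : Fin n =>
              ⟪A (e n k), A (e n j)⟫ - 2 * z * ⟪e n k, A (e n j)⟫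
                + z ^ 2 * ⟪e n k, e n j⟫) v‖ / ‖v‖})
    (hH : ∀ p q : ℕ, p ≤ 1 → q ≤ 1 → ∀ u : H, A u = (lam : ℂ) • u →
      Filter.Tendsto (fun n : ℕ =>
          ‖(∑ j : Fin n, ⟪(A ^ q) (e n j),
              (A ^ p) (∑ k : Fin n, ⟪e n k, u⟫ • e n k)⟫ • e n j)
            - ((lam : ℂ) ^ (p + q)) • u‖)
        Filter.atTop (nhds 0)) :
    Filter.Tendsto (fun n => G n (lam : ℂ)) Filter.atTop (nhds 0) := by
  classical
  obtain ⟨u, hu0, hu⟩ := hlam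
  set P : ℕ → H := fun n => ∑ k : Fin n, ⟪e n k, u⟫ • e n k with hPdef
  set d : (n : ℕ) → Fin n → ℂ := fun n j =>
    ⟪A (e n j), A (P n)⟫ - 2 * (lam : ℂ) * ⟪A (e n j), P n⟫ + (lam : ℂ) ^ 2 * ⟪e n j, P n⟫
    with hddef
  have hF11 := hH 1 1 le_rfl le_rfl u hu
  have hF01 := hH 0 1 (by norm_num) le_rfl u hu
  have hF00 := hH 0 0 (by norm_num) (by norm_num) u hu
  simp only [pow_one, pow_zero, one_smul, ContinuousLinearMap.one_apply, zero_add,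
    Nat.add_zero, Nat.reduceAdd] at hF11 hF01 hF00
  -- `S 0 0 n = P n`
  have hS00 : ∀ n, (∑ j : Fin n, ⟪e n j, P n⟫ • e n j) = P n := by
    intro n
    refine Finset.sum_congr rfl fun j _ => ?_
    rw [hPdef, (he n).inner_right_fintype]
  -- P n → u
  have hPu : Filter.Tendsto P Filter.atTop (nhds u) := by
    rw [tendsto_iff_norm_sub_tendsto_zero]
    refine hF00.congr fun n => ?_
    rw [hS00 n]
  have hupos : (0 : ℝ) < ‖u‖ := norm_pos_iff.mpr hu0
  have hPnorm : Filter.Tendsto (fun n => ‖P n‖) Filter.atTop (nhds ‖u‖) := hPu.norm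
  -- the norm of the combined sum tends to zero
  have hsplit : ∀ n, (∑ j : Fin n, d n j • e n j) =
      ((∑ j : Fin n, ⟪A (e n j), A (P n)⟫ • e n j) - (lam : ℂ) ^ 2 • u)
        - (2 * (lam : ℂ)) • ((∑ j : Fin n, ⟪A (e n j), P n⟫ • e n j) - (lam : ℂ) • u)
        + (lam : ℂ) ^ 2 • ((∑ j : Fin n, ⟪e n j, P n⟫ • e n j) - u) := by
    intro n
    have h1 : (∑ j : Fin n, d n j • e n j) =
        (∑ j : Fin n, ⟪A (e n j), A (P n)⟫ • e n j)
          - (2 * (lam : ℂ)) • (∑ j : Fin n, ⟪A (e n j), P n⟫ • e n j)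
          + (lam : ℂ) ^ 2 • (∑ j : Fin n, ⟪e n j, P n⟫ • e n j) := by
      rw [Finset.smul_sum, Finset.smul_sum, ← Finset.sum_sub_distrib,
        ← Finset.sum_add_distrib]
      refine Finset.sum_congr rfl fun j _ => ?_
      rw [hddef]
      module
    rw [h1]
    module
  have hD : Filter.Tendsto (fun n => ‖∑ j : Fin n, d n j • e n j‖) Filter.atTop (nhds 0) := by
    have hbound : ∀ n, ‖∑ j : Fin n, d n j • e n j‖ ≤
        ‖(∑ j : Fin n, ⟪A (e n j), A (P n)⟫ • e n j) - (lam : ℂ) ^ 2 • u‖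
          + ‖(2 : ℂ) * (lam : ℂ)‖ * ‖(∑ j : Fin n, ⟪A (e n j), P n⟫ • e n j) - (lam : ℂ) • u‖
          + ‖((lam : ℂ)) ^ 2‖ * ‖(∑ j : Fin n, ⟪e n j, P n⟫ • e n j) - u‖ := by
      intro n
      rw [hsplit n]
      refine le_trans (norm_add_le _ _) ?_
      gcongr
      refine le_trans (norm_sub_le _ _) ?_
      gcongr <;> rw [norm_smul]
      rw [norm_smul]
    have hlim : Filter.Tendsto (fun n =>
        ‖(∑ j : Fin n, ⟪A (e n j), A (P n)⟫ • e n j) - (lam : ℂ) ^ 2 • u‖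
          + ‖(2 : ℂ) * (lam : ℂ)‖ * ‖(∑ j : Fin n, ⟪A (e n j), P n⟫ • e n j) - (lam : ℂ) • u‖
          + ‖((lam : ℂ)) ^ 2‖ * ‖(∑ j : Fin n, ⟪e n j, P n⟫ • e n j) - u‖)
        Filter.atTop (nhds 0) := by
      have h := (hF11.add (hF01.const_mul ‖(2 : ℂ) * (lam : ℂ)‖)).add
        (hF00.const_mul ‖((lam : ℂ)) ^ 2‖)
      rw [show (0 : ℝ) + ‖(2 : ℂ) * (lam : ℂ)‖ * 0 + ‖((lam : ℂ)) ^ 2‖ * 0 = 0 by ring] at h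
      exact h
    exact squeeze_zero (fun n => norm_nonneg _) hbound hlim
  -- the test vectors
  set v : (n : ℕ) → EuclideanSpace ℂ (Fin n) :=
    fun n => (WithLp.equiv 2 (Fin n → ℂ)).symm (fun j => ⟪u, e n j⟫) with hvdef
  have hvnorm : ∀ n, ‖v n‖ = ‖P n‖ := by
    intro n
    rw [hvdef, hPdef]
    rw [EuclideanSpace.norm_eq, onb_norm_sum (he n)]
    congr 1
    refine Finset.sum_congr rfl fun j _ => ?_
    simp only [WithLp.equiv_symm_apply, PiLp.toLp_apply]
    rw [norm_inner_symm]
  -- matrix application formula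
  have hMv : ∀ n, (Matrix.of fun j k : Fin n =>
        ⟪A (e n k), A (e n j)⟫ - 2 * (lam : ℂ) * ⟪e n k, A (e n j)⟫
          + (lam : ℂ) ^ 2 * ⟪e n k, e n j⟫).mulVec (fun k => ⟪u, e n k⟫) =
      fun j => (starRingEnd ℂ) (d n j) := by
    intro n
    funext j
    simp only [Matrix.mulVec, dotProduct, Matrix.of_apply, hddef, hPdef]
    rw [map_sum A]
    simp only [inner_sum, map_sum, map_smul, inner_smul_right, map_sub, map_add, map_mul,
      inner_conj_symm, Complex.conj_ofReal, map_ofNat, map_pow, ← Finset.sum_sub_distrib,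
      ← Finset.sum_add_distrib, Finset.mul_sum]
    refine Finset.sum_congr rfl fun k _ => ?_
    ring
  have hMnorm : ∀ n, ‖Matrix.toEuclideanCLM (𝕜 := ℂ)
      (Matrix.of fun j k : Fin n =>
        ⟪A (e n k), A (e n j)⟫ - 2 * (lam : ℂ) * ⟪e n k, A (e n j)⟫
          + (lam : ℂ) ^ 2 * ⟪e n k, e n j⟫) (v n)‖ = ‖∑ j : Fin n, d n j • e n j‖ := by
    intro n
    simp only [hvdef, WithLp.equiv_symm_apply, Matrix.toEuclideanCLM_toLp]
    rw [onb_norm_sum (he n)]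
    rw [EuclideanSpace.norm_eq]
    congr 1
    refine Finset.sum_congr rfl fun j _ => ?_
    have : (WithLp.toLp 2 (Matrix.mulVec _ fun k => ⟪u, e n k⟫)) j
        = Matrix.toLin' (Matrix.of fun j k : Fin n =>
        ⟪A (e n k), A (e n j)⟫ - 2 * (lam : ℂ) * ⟪e n k, A (e n j)⟫
          + (lam : ℂ) ^ 2 * ⟪e n k, e n j⟫) (fun k => ⟪u, e n k⟫) j := rfl
    rw [this, Matrix.toLin'_apply, hMv n]
    simp
  -- eventually P n is big
  have hev : ∀ᶠ n in Filter.atTop, ‖u‖ / 2 < ‖P n‖ :=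
    hPnorm.eventually (eventually_gt_nhds (half_lt_self hupos))
  -- nonnegativity of G
  have hG0 : ∀ n, 0 ≤ G n (lam : ℂ) := by
    intro n
    rw [hG]
    refine Real.sInf_nonneg fun r hr => ?_
    obtain ⟨w, -, rfl⟩ := hr
    positivity
  -- upper bound for G
  have hGle : ∀ᶠ n in Filter.atTop,
      G n (lam : ℂ) ≤ ‖∑ j : Fin n, d n j • e n j‖ / ‖P n‖ := by
    filter_upwards [hev] with n hn
    have hPn : 0 < ‖P n‖ := lt_of_le_of_lt (by positivity) hn
    have hvne : v n ≠ 0 := by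
      intro h
      rw [← hvnorm n, h, norm_zero] at hPn
      exact lt_irrefl 0 hPn
    rw [hG]
    have hmem : ‖∑ j : Fin n, d n j • e n j‖ / ‖P n‖ ∈
        {r : ℝ | ∃ w : EuclideanSpace ℂ (Fin n), w ≠ 0 ∧
          r = ‖Matrix.toEuclideanCLM (𝕜 := ℂ)
            (Matrix.of fun j k : Fin n =>
              ⟪A (e n k), A (e n j)⟫ - 2 * (lam : ℂ) * ⟪e n k, A (e n j)⟫
                + ((lam : ℂ)) ^ 2 * ⟪e n k, e n j⟫) w‖ / ‖w‖} := by
      exact ⟨v n, hvne, by rw [hMnorm n, hvnorm n]⟩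
    refine csInf_le ⟨0, fun r hr => ?_⟩ hmem
    obtain ⟨w, -, rfl⟩ := hr
    positivity
  -- conclude by squeezing
  have hq : Filter.Tendsto (fun n => ‖∑ j : Fin n, d n j • e n j‖ / ‖P n‖)
      Filter.atTop (nhds 0) := by
    have := hD.div hPnorm (ne_of_gt hupos)
    rw [zero_div] at this
    exact this
  exact squeeze_zero' (Filter.Eventually.of_forall hG0) hGle hq
end
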